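/- arXiv:2106.08057 — 12 statements merged into one kernel-verified Lean document; each statement's English description precedes it below -/
import Mathlib

section
/- For integers k,l ≥ 1 with kl ≥ 4, define the (k,l)-sequence by a_0 = 0, a_1 = 1, a_{2n} = l·a_{2n-1} − a_{2n-2}, and a_{2n+1} = k·a_{2n} − a_{2n-1} for all n. Then for all n ≥ 0, a^{(k,l)}_{2n} = l·a^{(kl-2,kl-2)}_n and a^{(k,l)}_{2n+1} = a^{(kl-2,kl-2)}_{n+1} + a^{(kl-2,kl-2)}_n, where a^{(m,m)} denotes the (m,m)-sequence defined by the same recursion with k = l = m. -/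
/-- relation between the (k,l)-sequence and the (kl-2)-sequence. -/
theorem kl_seq_eq_klminus2_seq
    (k l : ℤ) (hk : 1 ≤ k) (hl : 1 ≤ l) (hkl : 4 ≤ k * l)
    (a b : ℕ → ℤ)
    (ha0 : a 0 = 0) (ha1 : a 1 = 1)
    (haeven : ∀ n : ℕ, a (2 * n + 2) = l * a (2 * n + 1) - a (2 * n))
    (haodd : ∀ n : ℕ, a (2 * n + 3) = k * a (2 * n + 2) - a (2 * n + 1))
    (hb0 : b 0 = 0) (hb1 : b 1 = 1)
    (hbrec : ∀ n : ℕ, b (n + 2) = (k * l - 2) * b (n + 1) - b n) :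
    ∀ n : ℕ, a (2 * n) = l * b n ∧ a (2 * n + 1) = b (n + 1) + b n := by
  intro n
  induction n with
  | zero => simp [ha0, ha1, hb0, hb1]
  | succ n ih =>
    obtain ⟨h1, h2⟩ := ih
    have he : a (2 * (n + 1)) = l * b (n + 1) := by
      have := haeven n
      rw [show 2 * (n + 1) = 2 * n + 2 by ring, this, h1, h2]; ring
    refine ⟨he, ?_⟩
    have := haodd n
    rw [show 2 * (n + 1) + 1 = 2 * n + 3 by ring, this,
      show 2 * n + 2 = 2 * (n + 1) by ring, he, h2, hbrec n]
    ring
end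

section
/- For integers k,l ≥ 1 with kl ≥ 4, the (k,l)-sequence satisfies a^{(k,l)}_{2n-1} = a^{(l,k)}_{2n-1} and k·a^{(k,l)}_{2n} = l·a^{(l,k)}_{2n} for all n ≥ 0. -/
/-- symmetry between the (k,l)-sequence and the (l,k)-sequence. -/
theorem kl_seq_symm
    (k l : ℤ) (hk : 1 ≤ k) (hl : 1 ≤ l) (hkl : 4 ≤ k * l)
    (a a' : ℕ → ℤ)
    (ha0 : a 0 = 0) (ha1 : a 1 = 1)
    (haeven : ∀ n : ℕ, a (2 * n + 2) = l * a (2 * n + 1) - a (2 * n))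
    (haodd : ∀ n : ℕ, a (2 * n + 3) = k * a (2 * n + 2) - a (2 * n + 1))
    (ha'0 : a' 0 = 0) (ha'1 : a' 1 = 1)
    (ha'even : ∀ n : ℕ, a' (2 * n + 2) = k * a' (2 * n + 1) - a' (2 * n))
    (ha'odd : ∀ n : ℕ, a' (2 * n + 3) = l * a' (2 * n + 2) - a' (2 * n + 1)) :
    ∀ n : ℕ, a (2 * n + 1) = a' (2 * n + 1) ∧ k * a (2 * n) = l * a' (2 * n) := by
  intro n
  induction n with
  | zero => simp [ha0, ha1, ha'0, ha'1]
  | succ n ih =>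
    obtain ⟨h1, h2⟩ := ih
    have heven : k * a (2 * (n + 1)) = l * a' (2 * (n + 1)) := by
      have := haeven n
      have := ha'even n
      have : 2 * (n + 1) = 2 * n + 2 := by ring
      rw [this, haeven n, ha'even n]
      rw [mul_sub, mul_sub, h1, ← h2]
      ring
    refine ⟨?_, heven⟩
    have h3 : 2 * (n + 1) + 1 = 2 * n + 3 := by ring
    rw [h3, haodd n, ha'odd n]
    have h4 : (2 : ℕ) * n + 2 = 2 * (n + 1) := by ring
    rw [← h4] at heven
    rw [heven, h1]
end

section
/- For integers k,l ≥ 1 with kl ≥ 4 and all integers n,m, the (k,l)-sequence satisfies the cross identity a^{(l,k)}_{2n-1}·a^{(k,l)}_m − a^{(k,l)}_{2n}·a^{(l,k)}_{m-1} = a^{(k,l)}_{2n-m}. -/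
/-- Uniqueness for two-sided three-term recurrences. -/
lemma seq_unique_aux (c x y : ℤ → ℤ)
    (hx : ∀ t : ℤ, x (t + 1) = c t * x t - x (t - 1))
    (hy : ∀ t : ℤ, y (t + 1) = c t * y t - y (t - 1))
    (h0 : x 0 = y 0) (h1 : x 1 = y 1) : ∀ t : ℤ, x t = y t := by
  have key : ∀ t : ℤ, x t = y t ∧ x (t + 1) = y (t + 1) := by
    intro t
    induction t using Int.induction_on with
    | zero => exact ⟨h0, by simpa using h1⟩
    | succ i ih =>
      refine ⟨ih.2, ?_⟩
      have hxr := hx ((i : ℤ) + 1)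
      have hyr := hy ((i : ℤ) + 1)
      simp only [add_sub_cancel_right] at hxr hyr
      rw [hxr, hyr, ih.1, ih.2]
    | pred i ih =>
      have hxr := hx (-(i : ℤ))
      have hyr := hy (-(i : ℤ))
      rw [ih.1] at hxr
      constructor
      · have h2 := ih.2
        nlinarith [hxr, hyr, h2]
      · simpa using ih.1
  exact fun t => (key t).1

/-- cross identity for the two-sided (k,l)-sequence. -/
theorem kl_seq_cross_even
    (k l : ℤ) (hk : 1 ≤ k) (hl : 1 ≤ l) (hkl : 4 ≤ k * l)
    (a a' : ℤ → ℤ)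
    (ha0 : a 0 = 0) (ha1 : a 1 = 1)
    (haeven : ∀ n : ℤ, a (2 * n) = l * a (2 * n - 1) - a (2 * n - 2))
    (haodd : ∀ n : ℤ, a (2 * n + 1) = k * a (2 * n) - a (2 * n - 1))
    (ha'0 : a' 0 = 0) (ha'1 : a' 1 = 1)
    (ha'even : ∀ n : ℤ, a' (2 * n) = k * a' (2 * n - 1) - a' (2 * n - 2))
    (ha'odd : ∀ n : ℤ, a' (2 * n + 1) = l * a' (2 * n) - a' (2 * n - 1)) :
    ∀ n m : ℤ, a' (2 * n - 1) * a m - a (2 * n) * a' (m - 1) = a (2 * n - m) := by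
  -- unified one-step recursions
  have hrecA : ∀ t : ℤ, a (t + 1) = (if (2:ℤ) ∣ t then k else l) * a t - a (t - 1) := by
    intro t
    rcases Int.even_or_odd t with ⟨u, hu⟩ | ⟨u, hu⟩
    · have ht : t = 2 * u := by omega
      subst ht
      rw [if_pos ⟨u, rfl⟩]
      exact haodd u
    · subst hu
      rw [if_neg (by omega)]
      have h := haeven (u + 1)
      rw [show (2 * (u + 1) - 1 : ℤ) = 2 * u + 1 by ring,
          show (2 * (u + 1) - 2 : ℤ) = 2 * u + 1 - 1 by ring,
          show (2 * (u + 1) : ℤ) = 2 * u + 1 + 1 by ring] at h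
      exact h
  have hrecA' : ∀ t : ℤ, a' (t + 1) = (if (2:ℤ) ∣ t then l else k) * a' t - a' (t - 1) := by
    intro t
    rcases Int.even_or_odd t with ⟨u, hu⟩ | ⟨u, hu⟩
    · have ht : t = 2 * u := by omega
      subst ht
      rw [if_pos ⟨u, rfl⟩]
      exact ha'odd u
    · subst hu
      rw [if_neg (by omega)]
      have h := ha'even (u + 1)
      rw [show (2 * (u + 1) - 1 : ℤ) = 2 * u + 1 by ring,
          show (2 * (u + 1) - 2 : ℤ) = 2 * u + 1 - 1 by ring,
          show (2 * (u + 1) : ℤ) = 2 * u + 1 + 1 by ring] at h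
      exact h
  have ha'neg1 : a' (-1) = -1 := by
    have h := ha'odd 0
    norm_num [ha'0, ha'1] at h
    linarith
  -- odd-index terms agree
  have hodd : ∀ t : ℤ, a (2 * t + 1) = a' (2 * t + 1) := by
    have hX : ∀ t : ℤ, a (2 * (t + 1) + 1)
        = (k * l - 2) * a (2 * t + 1) - a (2 * (t - 1) + 1) := by
      intro t
      have h1 := haodd (t + 1)
      have h2 := haeven (t + 1)
      have h3 := haodd t
      rw [show (2 * (t + 1) - 1 : ℤ) = 2 * t + 1 by ring] at h1
      rw [show (2 * (t + 1) - 1 : ℤ) = 2 * t + 1 by ring,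
          show (2 * (t + 1) - 2 : ℤ) = 2 * t by ring] at h2
      rw [show (2 * (t - 1) + 1 : ℤ) = 2 * t - 1 by ring]
      linear_combination h1 + k * h2 + h3
    have hY : ∀ t : ℤ, a' (2 * (t + 1) + 1)
        = (k * l - 2) * a' (2 * t + 1) - a' (2 * (t - 1) + 1) := by
      intro t
      have h1 := ha'odd (t + 1)
      have h2 := ha'even (t + 1)
      have h3 := ha'odd t
      rw [show (2 * (t + 1) - 1 : ℤ) = 2 * t + 1 by ring] at h1
      rw [show (2 * (t + 1) - 1 : ℤ) = 2 * t + 1 by ring,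
          show (2 * (t + 1) - 2 : ℤ) = 2 * t by ring] at h2
      rw [show (2 * (t - 1) + 1 : ℤ) = 2 * t - 1 by ring]
      linear_combination h1 + l * h2 + h3
    have ha2 : a 2 = l := by
      have h := haeven 1
      norm_num [ha0, ha1] at h
      exact h
    have ha3 : a 3 = k * l - 1 := by
      have h := haodd 1
      norm_num [ha1, ha2] at h
      linarith
    have ha'2 : a' 2 = k := by
      have h := ha'even 1
      norm_num [ha'0, ha'1] at h
      exact h
    have ha'3 : a' 3 = k * l - 1 := by
      have h := ha'odd 1
      norm_num [ha'1, ha'2] at h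
      linarith
    exact seq_unique_aux (fun _ => k * l - 2) (fun t => a (2 * t + 1))
      (fun t => a' (2 * t + 1)) hX hY
      (by norm_num [ha1, ha'1]) (by norm_num [ha3, ha'3])
  intro n m
  have hX : ∀ m : ℤ, a' (2 * n - 1) * a (m + 1) - a (2 * n) * a' (m + 1 - 1)
      = (if (2:ℤ) ∣ m then k else l) * (a' (2 * n - 1) * a m - a (2 * n) * a' (m - 1))
        - (a' (2 * n - 1) * a (m - 1) - a (2 * n) * a' (m - 1 - 1)) := by
    intro m
    have hA := hrecA m
    have hB := hrecA' (m - 1)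
    rw [show (m - 1 + 1 : ℤ) = m by ring] at hB
    have hc : (if (2:ℤ) ∣ (m - 1) then l else k) = (if (2:ℤ) ∣ m then k else l) := by
      by_cases h : (2:ℤ) ∣ m
      · rw [if_pos h, if_neg (by omega)]
      · rw [if_neg h, if_pos (by omega)]
    rw [hc] at hB
    simp only [add_sub_cancel_right]
    linear_combination (a' (2 * n - 1)) * hA - (a (2 * n)) * hB
  have hY : ∀ m : ℤ, a (2 * n - (m + 1))
      = (if (2:ℤ) ∣ m then k else l) * a (2 * n - m) - a (2 * n - (m - 1)) := by
    intro m
    have h := hrecA (2 * n - m)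
    have hc : (if (2:ℤ) ∣ (2 * n - m) then k else l) = (if (2:ℤ) ∣ m then k else l) := by
      by_cases hp : (2:ℤ) ∣ m
      · rw [if_pos (by omega), if_pos hp]
      · rw [if_neg (by omega), if_neg hp]
    rw [hc] at h
    rw [show (2 * n - (m + 1) : ℤ) = 2 * n - m - 1 by ring,
        show (2 * n - (m - 1) : ℤ) = 2 * n - m + 1 by ring]
    linear_combination h
  have h0 : a' (2 * n - 1) * a 0 - a (2 * n) * a' (0 - 1) = a (2 * n - 0) := by
    norm_num [ha0, ha'neg1]
  have h1 : a' (2 * n - 1) * a 1 - a (2 * n) * a' (1 - 1) = a (2 * n - 1) := by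
    have h := hodd (n - 1)
    rw [show (2 * (n - 1) + 1 : ℤ) = 2 * n - 1 by ring] at h
    norm_num [ha1, ha'0]
    linarith
  exact seq_unique_aux (fun m => if (2:ℤ) ∣ m then k else l)
    (fun m => a' (2 * n - 1) * a m - a (2 * n) * a' (m - 1))
    (fun m => a (2 * n - m)) hX hY h0 h1 m
end

section
/- For integers k,l ≥ 1 with kl ≥ 4 and all integers n,m, the (k,l)-sequence satisfies the cross identity a^{(k,l)}_{2n}·a^{(l,k)}_{m+1} − a^{(l,k)}_{2n+1}·a^{(k,l)}_m = a^{(k,l)}_{2n-m}. -/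
/-- second cross identity for the two-sided (k,l)-sequence. -/
theorem kl_seq_cross_odd
    (k l : ℤ) (hk : 1 ≤ k) (hl : 1 ≤ l) (hkl : 4 ≤ k * l)
    (a a' : ℤ → ℤ)
    (ha0 : a 0 = 0) (ha1 : a 1 = 1)
    (haeven : ∀ n : ℤ, a (2 * n) = l * a (2 * n - 1) - a (2 * n - 2))
    (haodd : ∀ n : ℤ, a (2 * n + 1) = k * a (2 * n) - a (2 * n - 1))
    (ha'0 : a' 0 = 0) (ha'1 : a' 1 = 1)
    (ha'even : ∀ n : ℤ, a' (2 * n) = k * a' (2 * n - 1) - a' (2 * n - 2))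
    (ha'odd : ∀ n : ℤ, a' (2 * n + 1) = l * a' (2 * n) - a' (2 * n - 1)) :
    ∀ n m : ℤ, a (2 * n) * a' (m + 1) - a' (2 * n + 1) * a m = a (2 * n - m) := by
  -- two-step recursion on odd-indexed terms
  have stepa : ∀ j : ℤ, a (2*j+3) = (k*l-2) * a (2*j+1) - a (2*j-1) := by
    intro j
    have h1 := haodd (j+1)
    have h2 := haeven (j+1)
    have h3 := haodd j
    ring_nf at h1 h2 h3 ⊢
    linear_combination h1 + k*h2 + h3
  have stepa' : ∀ j : ℤ, a' (2*j+3) = (k*l-2) * a' (2*j+1) - a' (2*j-1) := by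
    intro j
    have h1 := ha'odd (j+1)
    have h2 := ha'even (j+1)
    have h3 := ha'odd j
    ring_nf at h1 h2 h3 ⊢
    linear_combination h1 + l*h2 + h3
  have ha3 : a 3 = k*l - 1 := by
    have h1 := haodd 1
    have h2 := haeven 1
    norm_num [ha0, ha1] at h1 h2
    rw [h2] at h1
    linarith
  have ha'3 : a' 3 = k*l - 1 := by
    have h1 := ha'odd 1
    have h2 := ha'even 1
    norm_num [ha'0, ha'1] at h1 h2
    rw [h2] at h1
    linarith
  -- odd-indexed terms of the two sequences coincide
  have hoddpair : ∀ j : ℤ, a (2*j+1) = a' (2*j+1) ∧ a (2*j+3) = a' (2*j+3) := by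
    intro j
    induction j using Int.induction_on with
    | zero =>
      constructor
      · norm_num [ha1, ha'1]
      · norm_num [ha3, ha'3]
    | succ i ih =>
      obtain ⟨ih1, ih2⟩ := ih
      constructor
      · ring_nf at ih2 ⊢
        exact ih2
      · have s1 := stepa (i+1)
        have s2 := stepa' (i+1)
        ring_nf at s1 s2 ih1 ih2 ⊢
        rw [ih1, ih2] at s1
        linarith [s1, s2]
    | pred i ih =>
      obtain ⟨ih1, ih2⟩ := ih
      constructor
      · have s1 := stepa (-i)
        have s2 := stepa' (-i)
        ring_nf at s1 s2 ih1 ih2 ⊢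
        rw [ih1, ih2] at s1
        linarith [s1, s2]
      · ring_nf at ih1 ⊢
        exact ih1
  have hodd : ∀ j : ℤ, a (2*j+1) = a' (2*j+1) := fun j => (hoddpair j).1
  intro n
  -- main pair induction on m
  have main : ∀ m : ℤ,
      (a (2*n) * a' (m+1) - a' (2*n+1) * a m = a (2*n - m)) ∧
      (a (2*n) * a' (m+2) - a' (2*n+1) * a (m+1) = a (2*n - m - 1)) := by
    intro m
    induction m using Int.induction_on with
    | zero =>
      constructor
      · norm_num [ha'1, ha0]
      · have h2 := ha'even 1
        norm_num [ha'0, ha'1] at h2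
        have h3 := haodd n
        have h4 := hodd n
        norm_num [ha1, h2]
        linarith
    | succ i ih =>
      obtain ⟨ih1, ih2⟩ := ih
      refine ⟨?_, ?_⟩
      · ring_nf at ih2 ⊢
        linarith [ih2]
      · rcases Int.even_or_odd (i : ℤ) with ⟨t, ht⟩ | ⟨t, ht⟩
        · -- i = 2t
          rw [ht] at ih1 ih2 ⊢
          have h1 := ha'odd (t+1)   -- a'(2t+3) = l a'(2t+2) - a'(2t+1)
          have h2 := haeven (t+1)   -- a(2t+2) = l a(2t+1) - a(2t)
          have h3 := haeven (n-t)   -- a(2n-2t) = l a(2n-2t-1) - a(2n-2t-2)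
          ring_nf at h1 h2 h3 ih1 ih2 ⊢
          linear_combination (a (n*2)) * h1 - (a' (1+n*2)) * h2 + l * ih2 - ih1 - h3
        · -- i = 2t+1
          rw [ht] at ih1 ih2 ⊢
          have h1 := ha'even (t+2)  -- a'(2t+4) = k a'(2t+3) - a'(2t+2)
          have h2 := haodd (t+1)    -- a(2t+3) = k a(2t+2) - a(2t+1)
          have h3 := haodd (n-t-1)  -- a(2n-2t-1) = k a(2n-2t-2) - a(2n-2t-3)
          ring_nf at h1 h2 h3 ih1 ih2 ⊢
          linear_combination (a (n*2)) * h1 - (a' (1+n*2)) * h2 + k * ih2 - ih1 - h3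
    | pred i ih =>
      obtain ⟨ih1, ih2⟩ := ih
      refine ⟨?_, ?_⟩
      · rcases Int.even_or_odd (i : ℤ) with ⟨t, ht⟩ | ⟨t, ht⟩
        · -- i = 2t
          rw [ht] at ih1 ih2 ⊢
          have h1 := ha'even (1-t)   -- a'(-2t+2) = k a'(-2t+1) - a'(-2t)
          have h2 := haodd (-t)      -- a(-2t+1) = k a(-2t) - a(-2t-1)
          have h3 := haodd (n+t)     -- a(2n+2t+1) = k a(2n+2t) - a(2n+2t-1)
          ring_nf at h1 h2 h3 ih1 ih2 ⊢
          linear_combination (a (n*2)) * h1 - (a' (1+n*2)) * h2 + k * ih1 - ih2 - h3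
        · -- i = 2t+1
          rw [ht] at ih1 ih2 ⊢
          have h1 := ha'odd (-t)     -- a'(-2t+1) = l a'(-2t) - a'(-2t-1)
          have h2 := haeven (-t)     -- a(-2t) = l a(-2t-1) - a(-2t-2)
          have h3 := haeven (n+t+1)  -- a(2n+2t+2) = l a(2n+2t+1) - a(2n+2t)
          ring_nf at h1 h2 h3 ih1 ih2 ⊢
          linear_combination (a (n*2)) * h1 - (a' (1+n*2)) * h2 + l * ih1 - ih2 - h3
      · ring_nf at ih1 ⊢
        linarith [ih1]
  intro m
  exact (main m).1
end

section
/- Let k,l ≥ 1 with kl ≥ 4, let u = (√(kl) + √(kl−4))/2, and define s^{(k,l)}_{2n+1} = u^{−2n} and s^{(k,l)}_{2n} = √(l/k)·u^{−2n+1}. Then for every integer n, a^{(k,l)}_n − s^{(k,l)}_0·a^{(l,k)}_{n−1} = s^{(k,l)}_n. Consequently, the sequence (a^{(k,l)}_{n+1}/a^{(l,k)}_n)_{n≥1} is strictly decreasing and converges to s^{(k,l)}_0 = √(l/k)·u. -/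
lemma kl_two_step {P : ℕ → Prop} (h0 : P 0) (h1 : P 1)
    (hs : ∀ n, P n → P (n + 2)) : ∀ n, P n := by
  have h : ∀ n, P n ∧ P (n + 1) := by
    intro n
    induction n with
    | zero => exact ⟨h0, h1⟩
    | succ m ih => exact ⟨ih.2, hs m ih.1⟩
  exact fun n => (h n).1

lemma kl_key (k l : ℤ) (hk : 1 ≤ k) (hl : 1 ≤ l) (hkl : 4 ≤ k * l)
    (a a' : ℤ → ℤ)
    (ha0 : a 0 = 0) (ha1 : a 1 = 1)
    (haeven : ∀ n : ℤ, a (2 * n) = l * a (2 * n - 1) - a (2 * n - 2))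
    (haodd : ∀ n : ℤ, a (2 * n + 1) = k * a (2 * n) - a (2 * n - 1))
    (ha'0 : a' 0 = 0) (ha'1 : a' 1 = 1)
    (ha'even : ∀ n : ℤ, a' (2 * n) = k * a' (2 * n - 1) - a' (2 * n - 2))
    (ha'odd : ∀ n : ℤ, a' (2 * n + 1) = l * a' (2 * n) - a' (2 * n - 1))
    (u : ℝ)
    (hu : u = (Real.sqrt ((k : ℝ) * l) + Real.sqrt ((k : ℝ) * l - 4)) / 2) :
    ∀ n : ℤ, (a n : ℝ) - Real.sqrt ((l : ℝ) / k) * u * (a' (n - 1) : ℝ)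
      = (if Even n then Real.sqrt ((l : ℝ) / k) else 1) * u ^ (1 - n) := by
  have hk0 : (0:ℝ) < (k:ℝ) := by exact_mod_cast lt_of_lt_of_le one_pos hk
  have hl0 : (0:ℝ) < (l:ℝ) := by exact_mod_cast lt_of_lt_of_le one_pos hl
  have hkl4 : (4:ℝ) ≤ (k:ℝ) * l := by exact_mod_cast hkl
  set c := Real.sqrt ((k:ℝ) * l) with hcdef
  set d := Real.sqrt ((k:ℝ) * l - 4) with hddef
  have hc2 : c ^ 2 = (k:ℝ) * l := Real.sq_sqrt (by linarith)
  have hd2 : d ^ 2 = (k:ℝ) * l - 4 := Real.sq_sqrt (by linarith)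
  have hc0 : 0 ≤ c := Real.sqrt_nonneg _
  have hd0 : 0 ≤ d := Real.sqrt_nonneg _
  have hc_ge : 2 ≤ c := by nlinarith
  have hu1 : 1 ≤ u := by rw [hu]; linarith
  have hu0 : (0:ℝ) < u := lt_of_lt_of_le one_pos hu1
  set v := (c - d) / 2 with hvdef
  have hv : u * v = 1 := by rw [hu, hvdef]; nlinarith
  have hcv : u + v = c := by rw [hu, hvdef]; ring
  set r := Real.sqrt ((l:ℝ) / k) with hrdef
  have hr0 : (0:ℝ) < r := Real.sqrt_pos.mpr (by positivity)
  have hrc : r * c = (l:ℝ) := by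
    rw [hrdef, hcdef, ← Real.sqrt_mul (by positivity : (0:ℝ) ≤ (l:ℝ)/k),
      show (l:ℝ)/k * ((k:ℝ)*l) = (l:ℝ)^2 by field_simp]
    exact Real.sqrt_sq hl0.le
  have hkr : (k:ℝ) * r = c := by
    rw [hrdef, hcdef, show (k:ℝ) * Real.sqrt ((l:ℝ)/k)
        = Real.sqrt ((k:ℝ)^2) * Real.sqrt ((l:ℝ)/k) by rw [Real.sqrt_sq hk0.le],
      ← Real.sqrt_mul (by positivity), show (k:ℝ)^2 * ((l:ℝ)/k) = (k:ℝ)*l by field_simp]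
  have key1 : (l:ℝ) * u - r * u ^ 2 = r := by linear_combination (-u) * hrc + (-(r*u)) * hcv + r * hv
  have key2 : (k:ℝ) * (r * u) - u ^ 2 = 1 := by linear_combination u * hkr - u * hcv + hv
  set S : ℤ → ℝ := fun n => (if Even n then r else 1) * u ^ (1 - n) with hSdef
  set g : ℤ → ℝ := fun n => (a n : ℝ) - r * u * (a' (n - 1) : ℝ) - S n with hgdef
  have hne : u ≠ 0 := hu0.ne'
  have hstep : ∀ n : ℤ, g (n + 2) + g n = (if Even n then (l:ℝ) else (k:ℝ)) * g (n + 1) := by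
    intro n
    obtain ⟨m, hm | hm⟩ := Int.even_or_odd' n
    · subst hm
      have hA : a (2*m+2) = l * a (2*m+1) - a (2*m) := by
        rw [show (2*m+2 : ℤ) = 2*(m+1) by ring, show (2*m+1 : ℤ) = 2*(m+1)-1 by ring,
          show (2*m : ℤ) = 2*(m+1)-2 by ring]
        exact haeven (m+1)
      have hA' := ha'odd m
      have hAr : (a (2*m+2) : ℝ) = l * (a (2*m+1) : ℝ) - (a (2*m) : ℝ) := by exact_mod_cast hA
      have hA'r : (a' (2*m+1) : ℝ) = l * (a' (2*m) : ℝ) - (a' (2*m-1) : ℝ) := by exact_mod_cast hA'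
      have hev : Even (2*m) := ⟨m, two_mul m⟩
      have hev2 : Even (2*m+2) := ⟨m+1, by ring⟩
      have hod : ¬ Even (2*m+1) := by simp [Int.even_add_one, hev]
      have e1 : u ^ (1-(2*m+2)) = u ^ (-(2*m)-1) := by congr 1; ring
      have e2 : u ^ (1-(2*m+1)) = u ^ (-(2*m)-1) * u := by
        rw [← zpow_add_one₀ hne]; congr 1; ring
      have e3 : u ^ ((1:ℤ)-2*m) = u ^ (-(2*m)-1) * u * u := by
        rw [← zpow_add_one₀ hne, ← zpow_add_one₀ hne]; congr 1; ring
      simp only [hgdef, hSdef, if_pos hev, if_pos hev2, if_neg hod,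
        show 2*m+2-1 = 2*m+1 by ring, show 2*m+1-1 = 2*m by ring, e1, e2, e3]
      rw [show (2:ℤ)*m + 2 = 2*m + 2 by ring]
      linear_combination hAr - (r*u) * hA'r + (u ^ (-(2*m)-1)) * key1
    · subst hm
      have hA : a (2*m+1+2) = k * a (2*m+1+1) - a (2*m+1) := by
        rw [show (2*m+1+2 : ℤ) = 2*(m+1)+1 by ring, show (2*m+1+1 : ℤ) = 2*(m+1) by ring,
          show (2*m+1 : ℤ) = 2*(m+1)-1 by ring]
        exact haodd (m+1)
      have hA' : a' (2*m+1+1) = k * a' (2*m+1) - a' (2*m) := by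
        rw [show (2*m+1+1 : ℤ) = 2*(m+1) by ring, show (2*m+1 : ℤ) = 2*(m+1)-1 by ring,
          show (2*m : ℤ) = 2*(m+1)-2 by ring]
        exact ha'even (m+1)
      have hAr : (a (2*m+1+2) : ℝ) = k * (a (2*m+1+1) : ℝ) - (a (2*m+1) : ℝ) := by exact_mod_cast hA
      have hA'r : (a' (2*m+1+1) : ℝ) = k * (a' (2*m+1) : ℝ) - (a' (2*m) : ℝ) := by exact_mod_cast hA'
      have hev : Even (2*m) := ⟨m, two_mul m⟩
      have hod : ¬ Even (2*m+1) := by simp [Int.even_add_one, hev]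
      have hod2 : ¬ Even (2*m+1+2) := by
        simp [Int.even_add, Int.even_add_one, hev]
      have hev2 : Even (2*m+1+1) := ⟨m+1, by ring⟩
      have e1 : u ^ (1-(2*m+1+2)) = u ^ (-(2*m)-2) := by congr 1; ring
      have e2 : u ^ (1-(2*m+1+1)) = u ^ (-(2*m)-2) * u := by
        rw [← zpow_add_one₀ hne]; congr 1; ring
      have e3 : u ^ ((1:ℤ)-(2*m+1)) = u ^ (-(2*m)-2) * u * u := by
        rw [← zpow_add_one₀ hne, ← zpow_add_one₀ hne]; congr 1; ring
      simp only [hgdef, hSdef, if_pos hev2, if_neg hod, if_neg hod2,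
        show 2*m+1+2-1 = 2*m+1+1 by ring, show 2*m+1+1-1 = 2*m+1 by ring,
        show 2*m+1-1 = 2*m by ring, e1, e2, e3]
      linear_combination hAr - (r*u) * hA'r + (u ^ (-(2*m)-2)) * key2
  have ha'm1 : a' (-1) = -1 := by
    have h := ha'odd 0
    norm_num [ha'0, ha'1] at h
    linarith
  have g0 : g 0 = 0 := by
    simp only [hgdef, hSdef, show (0:ℤ)-1 = -1 by ring, ha0, ha'm1,
      if_pos (Even.zero : Even (0:ℤ))]
    norm_num [zpow_one]
  have g1 : g 1 = 0 := by
    simp only [hgdef, hSdef, show (1:ℤ)-1 = 0 by ring, ha1, ha'0,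
      if_neg (by decide : ¬ Even (1:ℤ))]
    norm_num [zpow_zero]
  have main : ∀ n : ℤ, g n = 0 ∧ g (n + 1) = 0 := by
    intro n
    induction n using Int.induction_on with
    | zero => exact ⟨g0, g1⟩
    | succ i ih =>
      refine ⟨ih.2, ?_⟩
      have h := hstep i
      rw [ih.1, ih.2] at h
      rw [show ((i:ℤ) + 1 + 1) = (i:ℤ) + 2 by ring]
      simpa using h
    | pred i ih =>
      constructor
      · have h := hstep (-(i:ℤ) - 1)
        rw [show (-(i:ℤ) - 1 + 2) = -(i:ℤ) + 1 by ring,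
          show (-(i:ℤ) - 1 + 1) = -(i:ℤ) by ring, ih.1, ih.2] at h
        simpa using h
      · rw [show (-(i:ℤ) - 1 + 1) = -(i:ℤ) by ring]; exact ih.1
  intro n
  have h := (main n).1
  simp only [hgdef, hSdef] at h
  linarith [h]
/-- the ratio identity `a_n - s₀ a'_{n-1} = s_n` and the limit of
consecutive ratios of the (k,l)-sequence. -/
theorem kl_seq_ratio
    (k l : ℤ) (hk : 1 ≤ k) (hl : 1 ≤ l) (hkl : 4 ≤ k * l)
    (a a' : ℤ → ℤ)
    (ha0 : a 0 = 0) (ha1 : a 1 = 1)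
    (haeven : ∀ n : ℤ, a (2 * n) = l * a (2 * n - 1) - a (2 * n - 2))
    (haodd : ∀ n : ℤ, a (2 * n + 1) = k * a (2 * n) - a (2 * n - 1))
    (ha'0 : a' 0 = 0) (ha'1 : a' 1 = 1)
    (ha'even : ∀ n : ℤ, a' (2 * n) = k * a' (2 * n - 1) - a' (2 * n - 2))
    (ha'odd : ∀ n : ℤ, a' (2 * n + 1) = l * a' (2 * n) - a' (2 * n - 1))
    (u : ℝ)
    (hu : u = (Real.sqrt ((k : ℝ) * l) + Real.sqrt ((k : ℝ) * l - 4)) / 2)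
    (s : ℤ → ℝ)
    (hsodd : ∀ n : ℤ, s (2 * n + 1) = u ^ (-(2 * n)))
    (hseven : ∀ n : ℤ, s (2 * n) = Real.sqrt ((l : ℝ) / k) * u ^ (-(2 * n) + 1)) :
    (∀ n : ℤ, (a n : ℝ) - s 0 * (a' (n - 1) : ℝ) = s n) ∧
    StrictAnti (fun n : ℕ => (a ((n : ℤ) + 2) : ℝ) / (a' ((n : ℤ) + 1) : ℝ)) ∧
    Filter.Tendsto (fun n : ℕ => (a ((n : ℤ) + 2) : ℝ) / (a' ((n : ℤ) + 1) : ℝ))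
      Filter.atTop (nhds (s 0)) ∧
    s 0 = Real.sqrt ((l : ℝ) / k) * u := by
  have hk0 : (0:ℝ) < (k:ℝ) := by exact_mod_cast lt_of_lt_of_le one_pos hk
  have hl0 : (0:ℝ) < (l:ℝ) := by exact_mod_cast lt_of_lt_of_le one_pos hl
  have hkl4 : (4:ℝ) ≤ (k:ℝ) * l := by exact_mod_cast hkl
  set r := Real.sqrt ((l:ℝ) / k) with hrdef
  set r' := Real.sqrt ((k:ℝ) / l) with hr'def
  have hr0 : (0:ℝ) < r := Real.sqrt_pos.mpr (by positivity)
  have hr'0 : (0:ℝ) < r' := Real.sqrt_pos.mpr (by positivity)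
  have hu1 : 1 ≤ u := by
    have hc2 : Real.sqrt ((k:ℝ) * l) ^ 2 = (k:ℝ) * l := Real.sq_sqrt (by linarith)
    have hc0 : 0 ≤ Real.sqrt ((k:ℝ) * l) := Real.sqrt_nonneg _
    have hd0 : 0 ≤ Real.sqrt ((k:ℝ) * l - 4) := Real.sqrt_nonneg _
    have : 2 ≤ Real.sqrt ((k:ℝ) * l) := by nlinarith
    rw [hu]; linarith
  have hu0 : (0:ℝ) < u := lt_of_lt_of_le one_pos hu1
  have hrr : r' * r = 1 := by
    rw [hrdef, hr'def, ← Real.sqrt_mul (by positivity),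
      show ((k:ℝ)/l) * ((l:ℝ)/k) = 1 by field_simp]
    exact Real.sqrt_one
  have K1 := kl_key k l hk hl hkl a a' ha0 ha1 haeven haodd ha'0 ha'1 ha'even ha'odd u hu
  have hu' : u = (Real.sqrt ((l : ℝ) * k) + Real.sqrt ((l : ℝ) * k - 4)) / 2 := by
    rw [hu, mul_comm ((k:ℝ)) ((l:ℝ))]
  have hkl' : 4 ≤ l * k := by rw [mul_comm l k]; exact hkl
  have K2 := kl_key l k hl hk hkl' a' a ha'0 ha'1 ha'even ha'odd ha0 ha1 haeven haodd u hu'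
  -- value of s 0
  have hs0 : s 0 = r * u := by
    have h := hseven 0
    norm_num at h
    exact h
  -- s agrees with the closed form
  have hseq : ∀ n : ℤ, s n = (if Even n then r else 1) * u ^ (1 - n) := by
    intro n
    obtain ⟨m, hm | hm⟩ := Int.even_or_odd' n
    · subst hm
      rw [hseven m, if_pos ⟨m, two_mul m⟩]
      congr 2
      ring
    · subst hm
      have hev : Even (2*m) := ⟨m, two_mul m⟩
      have hod : ¬ Even (2*m+1) := by simp [Int.even_add_one, hev]
      rw [hsodd m, if_neg hod, one_mul]
      congr 1
      ring
  -- Part 1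
  have part1 : ∀ n : ℤ, (a n : ℝ) - s 0 * (a' (n - 1) : ℝ) = s n := by
    intro n
    rw [hs0, hseq n]
    exact K1 n
  -- parity-free recurrences
  have arec : ∀ n : ℤ, a (n + 2) = (if Even n then l else k) * a (n + 1) - a n := by
    intro n
    obtain ⟨m, hm | hm⟩ := Int.even_or_odd' n
    · subst hm
      rw [if_pos ⟨m, two_mul m⟩]
      rw [show (2*m+2 : ℤ) = 2*(m+1) by ring, show (2*m+1 : ℤ) = 2*(m+1)-1 by ring,
        show (2*m : ℤ) = 2*(m+1)-2 by ring]
      exact haeven (m+1)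
    · subst hm
      have hev : Even (2*m) := ⟨m, two_mul m⟩
      have hod : ¬ Even (2*m+1) := by simp [Int.even_add_one, hev]
      rw [if_neg hod]
      rw [show (2*m+1+2 : ℤ) = 2*(m+1)+1 by ring, show (2*m+1+1 : ℤ) = 2*(m+1) by ring,
        show (2*m+1 : ℤ) = 2*(m+1)-1 by ring]
      exact haodd (m+1)
  have a'rec : ∀ n : ℤ, a' (n + 1) = (if Even n then l else k) * a' n - a' (n - 1) := by
    intro n
    obtain ⟨m, hm | hm⟩ := Int.even_or_odd' n
    · subst hm
      rw [if_pos ⟨m, two_mul m⟩]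
      exact ha'odd m
    · subst hm
      have hev : Even (2*m) := ⟨m, two_mul m⟩
      have hod : ¬ Even (2*m+1) := by simp [Int.even_add_one, hev]
      rw [if_neg hod]
      rw [show (2*m+1+1 : ℤ) = 2*(m+1) by ring, show (2*m+1 : ℤ) = 2*(m+1)-1 by ring]
      rw [show (2*(m+1)-1-1 : ℤ) = 2*(m+1)-2 by ring]
      exact ha'even (m+1)
  -- determinant identity
  have Eid : ∀ m : ℕ, a ((m:ℤ) + 1) * a' ((m:ℤ) + 1) - a ((m:ℤ) + 2) * a' (m:ℤ) = 1 := by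
    intro m
    induction m with
    | zero => norm_num [ha1, ha'1, ha'0]
    | succ i ih =>
      have h1 := arec ((i:ℤ) + 1)
      have h2 := a'rec ((i:ℤ) + 1)
      rw [show ((i:ℤ)+1+2) = (i:ℤ)+3 by ring, show ((i:ℤ)+1+1) = (i:ℤ)+2 by ring] at h1
      rw [show ((i:ℤ)+1+1) = (i:ℤ)+2 by ring, show ((i:ℤ)+1-1) = (i:ℤ) by ring] at h2
      push_cast
      rw [show ((i:ℤ)+1+1) = (i:ℤ)+2 by ring, show ((i:ℤ)+1+2) = (i:ℤ)+3 by ring]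
      linear_combination ih + a ((i:ℤ)+2) * h2 - a' ((i:ℤ)+1) * h1
  -- growth of a'
  have grow : ∀ n : ℤ, (0:ℤ) ≤ a' (n - 1) → a' (n - 1) + 1 ≤ a' (n + 1) := by
    intro n hpos
    have h2 := K2 (n + 1)
    rw [show (n+1-1 : ℤ) = n by ring] at h2
    have h1 := K1 n
    have hX1 : (0:ℝ) < (if Even (n+1) then r' else 1) * u ^ (1 - (n+1)) := by
      split <;> positivity
    have hX2 : (0:ℝ) < (if Even n then r else 1) * u ^ (1 - n) := by
      split <;> positivity
    have comb : (a' (n+1) : ℝ)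
        = (if Even (n+1) then r' else 1) * u ^ (1 - (n+1))
          + r' * u * ((if Even n then r else 1) * u ^ (1 - n))
          + (r' * r) * u^2 * (a' (n-1) : ℝ) := by
      linear_combination h2 + (r' * u) * h1
    rw [hrr, one_mul] at comb
    have hposR : (0:ℝ) ≤ (a' (n-1) : ℝ) := by exact_mod_cast hpos
    have hu2 : (1:ℝ) ≤ u ^ 2 := by nlinarith
    have hlt : (a' (n-1) : ℝ) < (a' (n+1) : ℝ) := by
      nlinarith [hX1, hX2, mul_pos (mul_pos hr'0 hu0) hX2]
    have : a' (n-1) < a' (n+1) := by exact_mod_cast hlt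
    omega
  have posA' : ∀ m : ℕ, (0:ℤ) ≤ a' (m:ℤ) := by
    refine kl_two_step (by norm_num [ha'0]) (by norm_num [ha'1]) ?_
    intro n hn
    have g := grow ((n:ℤ) + 1)
    rw [show ((n:ℤ)+1-1) = (n:ℤ) by ring, show ((n:ℤ)+1+1) = (n:ℤ)+2 by ring] at g
    have := g hn
    push_cast
    linarith
  have growN : ∀ n : ℕ, a' (n:ℤ) + 1 ≤ a' ((n:ℤ) + 2) := by
    intro n
    have g := grow ((n:ℤ) + 1)
    rw [show ((n:ℤ)+1-1) = (n:ℤ) by ring, show ((n:ℤ)+1+1) = (n:ℤ)+2 by ring] at g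
    exact g (posA' n)
  have ha'2 : a' 2 = k := by
    have h := ha'even 1
    norm_num [ha'0, ha'1] at h
    exact h
  have pos1 : ∀ n : ℕ, 1 ≤ a' ((n:ℤ) + 1) := by
    refine kl_two_step (by norm_num [ha'1]) (by norm_num [ha'2]; omega) ?_
    intro n hn
    have g := growN (n + 1)
    push_cast at g ⊢
    rw [show ((n:ℤ)+1+2) = (n:ℤ)+2+1 by ring] at g
    linarith
  have bound : ∀ n : ℕ, (n:ℤ) ≤ 2 * a' ((n:ℤ) + 1) := by
    refine kl_two_step (by norm_num [ha'1]) (by norm_num [ha'2]; omega) ?_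
    intro n hn
    have g := growN (n + 1)
    push_cast at g ⊢
    rw [show ((n:ℤ)+1+2) = (n:ℤ)+2+1 by ring] at g
    linarith
  -- strict antitonicity
  have hSA : StrictAnti (fun n : ℕ => (a ((n : ℤ) + 2) : ℝ) / (a' ((n : ℤ) + 1) : ℝ)) := by
    refine strictAnti_nat_of_succ_lt ?_
    intro n
    have d1 : (0:ℝ) < (a' ((n:ℤ) + 1) : ℝ) := by exact_mod_cast lt_of_lt_of_le one_pos (pos1 n)
    have d2 : (0:ℝ) < (a' ((n:ℤ) + 2) : ℝ) := by
      have := pos1 (n + 1)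
      push_cast at this
      rw [show ((n:ℤ)+1+1) = (n:ℤ)+2 by ring] at this
      exact_mod_cast lt_of_lt_of_le one_pos this
    have E := Eid (n + 1)
    push_cast at E
    rw [show ((n:ℤ)+1+1) = (n:ℤ)+2 by ring, show ((n:ℤ)+1+2) = (n:ℤ)+3 by ring] at E
    have ER : ((a ((n:ℤ)+2) : ℝ)) * (a' ((n:ℤ)+2) : ℝ)
        - (a ((n:ℤ)+3) : ℝ) * (a' ((n:ℤ)+1) : ℝ) = 1 := by exact_mod_cast E
    show (a ((↑(n+1) : ℤ) + 2) : ℝ) / (a' ((↑(n+1) : ℤ) + 1) : ℝ)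
        < (a ((n:ℤ) + 2) : ℝ) / (a' ((n:ℤ) + 1) : ℝ)
    push_cast
    rw [show ((n:ℤ)+1+2) = (n:ℤ)+3 by ring, show ((n:ℤ)+1+1) = (n:ℤ)+2 by ring]
    rw [div_lt_div_iff₀ d2 d1]
    linarith
  -- the limit
  have hane : ∀ n : ℕ, ((a' ((n:ℤ) + 1) : ℝ)) ≠ 0 := by
    intro n
    have : (0:ℝ) < (a' ((n:ℤ) + 1) : ℝ) := by exact_mod_cast lt_of_lt_of_le one_pos (pos1 n)
    exact this.ne'
  have hfe : ∀ n : ℕ, (a ((n : ℤ) + 2) : ℝ) / (a' ((n : ℤ) + 1) : ℝ)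
      = s 0 + s ((n:ℤ) + 2) / (a' ((n : ℤ) + 1) : ℝ) := by
    intro n
    have hp := part1 ((n:ℤ) + 2)
    rw [show ((n:ℤ)+2-1) = (n:ℤ)+1 by ring] at hp
    have hval : (a ((n:ℤ)+2) : ℝ) = s 0 * (a' ((n:ℤ)+1) : ℝ) + s ((n:ℤ)+2) := by linarith
    rw [hval, add_div, mul_div_assoc, div_self (hane n), mul_one]
  set B := max 1 r with hBdef
  have sbound : ∀ n : ℕ, ‖s ((n:ℤ) + 2) / (a' ((n:ℤ) + 1) : ℝ)‖
      ≤ B * ((a' ((n:ℤ) + 1) : ℝ))⁻¹ := by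
    intro n
    have hzle : u ^ ((1:ℤ) - ((n:ℤ)+2)) ≤ 1 := by
      rw [show ((1:ℤ) - ((n:ℤ)+2)) = -((n:ℤ)+1) by ring, zpow_neg]
      refine inv_le_one_of_one_le₀ ?_
      rw [show ((n:ℤ)+1) = ((n+1 : ℕ) : ℤ) by push_cast; ring, zpow_natCast]
      exact one_le_pow₀ hu1
    have hzpos : (0:ℝ) < u ^ ((1:ℤ) - ((n:ℤ)+2)) := by positivity
    have hs_pos : 0 < s ((n:ℤ) + 2) := by
      rw [hseq]; split <;> positivity
    have hs_le : s ((n:ℤ) + 2) ≤ B := by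
      rw [hseq]
      split
      · calc r * u ^ ((1:ℤ) - ((n:ℤ)+2)) ≤ r * 1 := by nlinarith
          _ ≤ B := by rw [mul_one]; exact le_max_right 1 r
      · calc 1 * u ^ ((1:ℤ) - ((n:ℤ)+2)) ≤ 1 := by nlinarith
          _ ≤ B := le_max_left 1 r
    have hd : (0:ℝ) < (a' ((n:ℤ) + 1) : ℝ) := by
      exact_mod_cast lt_of_lt_of_le one_pos (pos1 n)
    rw [Real.norm_of_nonneg (by positivity)]
    rw [div_eq_mul_inv]
    exact mul_le_mul_of_nonneg_right hs_le (by positivity)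
  have T1 : Filter.Tendsto (fun n : ℕ => ((a' ((n:ℤ) + 1) : ℝ))) Filter.atTop Filter.atTop := by
    refine Filter.tendsto_atTop_mono (fun n => ?_)
      (Filter.Tendsto.atTop_div_const two_pos tendsto_natCast_atTop_atTop)
    have := bound n
    have : ((n:ℤ) : ℝ) ≤ ((2 * a' ((n:ℤ) + 1) : ℤ) : ℝ) := by exact_mod_cast this
    push_cast at this
    linarith
  have T2 : Filter.Tendsto (fun n : ℕ => ((a' ((n:ℤ) + 1) : ℝ))⁻¹) Filter.atTop (nhds 0) :=
    T1.inv_tendsto_atTop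
  have T3 : Filter.Tendsto (fun n : ℕ => B * ((a' ((n:ℤ) + 1) : ℝ))⁻¹) Filter.atTop (nhds 0) := by
    simpa using T2.const_mul B
  have T4 : Filter.Tendsto (fun n : ℕ => s ((n:ℤ) + 2) / ((a' ((n:ℤ) + 1) : ℝ)))
      Filter.atTop (nhds 0) := squeeze_zero_norm sbound T3
  have Tfin : Filter.Tendsto (fun n : ℕ => (a ((n : ℤ) + 2) : ℝ) / (a' ((n : ℤ) + 1) : ℝ))
      Filter.atTop (nhds (s 0)) := by
    refine Filter.Tendsto.congr (fun n => (hfe n).symm) ?_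
    simpa using tendsto_const_nhds.add T4
  exact ⟨part1, hSA, Tfin, hs0⟩
end

section
/- Let x be a real number with 1/2 ≤ x < 1, and let S⁺ = {(a,b) ∈ ℤ×ℤ : 0 < (1−x)·a − x·b ≤ 1}. Then for (a,b) ∈ ℤ×ℤ, (a,b) ∈ S⁺ if and only if 1 + ⌊xb/(1−x)⌋ ≤ a ≤ 1 + ⌊x(b+1)/(1−x)⌋. Moreover, the map (a,b) ↦ a + b is a bijection from S⁺ to ℤ, with inverse m ↦ (⌊x·m⌋ + 1, ⌈(1−x)·m⌉ − 1). -/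
/-- the set S⁺ and its bijection with ℤ. -/
theorem divide_and_conquer_plus
    (x : ℝ) (hx1 : 1 / 2 ≤ x) (hx2 : x < 1) :
    (∀ a b : ℤ,
      (0 < (1 - x) * a - x * b ∧ (1 - x) * a - x * b ≤ 1) ↔
        (1 + ⌊x * b / (1 - x)⌋ ≤ a ∧ a ≤ 1 + ⌊x * (b + 1) / (1 - x)⌋)) ∧
    ∃ e : {p : ℤ × ℤ // 0 < (1 - x) * p.1 - x * p.2 ∧ (1 - x) * p.1 - x * p.2 ≤ 1} ≃ ℤ,
      (∀ p, e p = p.1.1 + p.1.2) ∧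
      (∀ m : ℤ, ((e.symm m : ℤ × ℤ) = (⌊x * m⌋ + 1, ⌈(1 - x) * m⌉ - 1))) := by
  have ht : (0:ℝ) < 1 - x := by linarith
  have hceil : ∀ m : ℤ, ⌈(1 - x) * (m:ℝ)⌉ = m - ⌊x * (m:ℝ)⌋ := by
    intro m
    have h : (1 - x) * (m:ℝ) = -(x * m) + m := by ring
    rw [h, Int.ceil_add_intCast, Int.ceil_neg]
    omega
  constructor
  · intro a b
    constructor
    · rintro ⟨h1, h2⟩
      constructor
      · rw [add_comm, Int.add_one_le_iff, Int.floor_lt, div_lt_iff₀ ht]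
        nlinarith
      · have : (a:ℤ) - 1 ≤ ⌊x * (b + 1) / (1 - x)⌋ := by
          rw [Int.le_floor, le_div_iff₀ ht]
          push_cast
          nlinarith
        omega
    · rintro ⟨h1, h2⟩
      have h1' : (x * b / (1 - x) : ℝ) < a := by
        apply Int.floor_lt.mp; omega
      have h2' : ((a:ℝ) - 1) ≤ x * (b + 1) / (1 - x) := by
        have : ((a - 1 : ℤ) : ℝ) ≤ x * ((b:ℝ) + 1) / (1 - x) := Int.le_floor.mp (by omega)
        push_cast at this; exact this
      rw [div_lt_iff₀ ht] at h1'
      rw [le_div_iff₀ ht] at h2'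
      constructor
      · nlinarith
      · nlinarith
  · refine ⟨⟨fun p => p.1.1 + p.1.2,
      fun m => ⟨(⌊x * (m:ℝ)⌋ + 1, ⌈(1 - x) * (m:ℝ)⌉ - 1), ?_, ?_⟩, ?_, ?_⟩,
      fun p => rfl, fun m => rfl⟩
    · have hf2 : x * (m:ℝ) - 1 < ⌊x * (m:ℝ)⌋ := Int.sub_one_lt_floor _
      rw [hceil m]
      push_cast
      nlinarith
    · have hf1 : (⌊x * (m:ℝ)⌋ : ℝ) ≤ x * m := Int.floor_le _
      rw [hceil m]
      push_cast
      nlinarith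
    · rintro ⟨⟨a, b⟩, h1, h2⟩
      have hm : ((a + b : ℤ) : ℝ) = (a:ℝ) + b := by push_cast; ring
      have hfloor : ⌊x * ((a + b : ℤ) : ℝ)⌋ = a - 1 := by
        rw [Int.floor_eq_iff, hm]
        push_cast
        constructor <;> nlinarith
      simp only [Subtype.mk.injEq, Prod.mk.injEq]
      rw [hfloor, hceil (a + b), hfloor]
      omega
    · intro m
      simp only []
      rw [hceil m]
      ring
end

section
/- Let x be a real number with 1/2 ≤ x < 1, and let S⁻ = {(a,b) ∈ ℤ×ℤ : 0 ≤ (1−x)·a − x·b < 1}. Then for (a,b) ∈ ℤ×ℤ, (a,b) ∈ S⁻ if and only if ⌈xb/(1−x)⌉ ≤ a ≤ ⌈x(b+1)/(1−x)⌉. Moreover, the map (a,b) ↦ a + b is a bijection from S⁻ to ℤ, with inverse m ↦ (⌈x·m⌉, ⌊(1−x)·m⌋). -/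
/-- the set S⁻ and its bijection with ℤ. -/
theorem divide_and_conquer_minus
    (x : ℝ) (hx1 : 1 / 2 ≤ x) (hx2 : x < 1) :
    (∀ a b : ℤ,
      (0 ≤ (1 - x) * a - x * b ∧ (1 - x) * a - x * b < 1) ↔
        (⌈x * b / (1 - x)⌉ ≤ a ∧ a ≤ ⌈x * (b + 1) / (1 - x)⌉)) ∧
    ∃ e : {p : ℤ × ℤ // 0 ≤ (1 - x) * p.1 - x * p.2 ∧ (1 - x) * p.1 - x * p.2 < 1} ≃ ℤ,
      (∀ p, e p = p.1.1 + p.1.2) ∧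
      (∀ m : ℤ, ((e.symm m : ℤ × ℤ) = (⌈x * m⌉, ⌊(1 - x) * m⌋))) := by
  have ht : (0:ℝ) < 1 - x := by linarith
  have key : ∀ m : ℤ, ⌊(1 - x) * (m:ℝ)⌋ = m - ⌈x * (m:ℝ)⌉ := by
    intro m
    have h : (1 - x) * (m:ℝ) = (m:ℝ) + (-(x * m)) := by ring
    rw [h, Int.floor_intCast_add, Int.floor_neg, sub_eq_add_neg]
  constructor
  · intro a b
    rw [Int.ceil_le, Int.le_ceil_iff, div_le_iff₀ ht, lt_div_iff₀ ht]
    constructor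
    · rintro ⟨h1, h2⟩
      constructor <;> nlinarith
    · rintro ⟨h1, h2⟩
      constructor <;> nlinarith
  · have mem : ∀ m : ℤ, 0 ≤ (1 - x) * ((⌈x * (m:ℝ)⌉ : ℤ) : ℝ) - x * ((⌊(1 - x) * (m:ℝ)⌋ : ℤ) : ℝ)
        ∧ (1 - x) * ((⌈x * (m:ℝ)⌉ : ℤ) : ℝ) - x * ((⌊(1 - x) * (m:ℝ)⌋ : ℤ) : ℝ) < 1 := by
      intro m
      rw [key m]
      have h1 := Int.le_ceil (x * (m:ℝ))
      have h2 := Int.ceil_lt_add_one (x * (m:ℝ))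
      push_cast
      constructor <;> nlinarith
    refine ⟨{ toFun := fun p => p.1.1 + p.1.2,
              invFun := fun m => ⟨(⌈x * (m:ℝ)⌉, ⌊(1 - x) * (m:ℝ)⌋), by
                simpa using mem m⟩,
              left_inv := ?_, right_inv := ?_ }, fun p => rfl, fun m => rfl⟩
    · rintro ⟨⟨a, b⟩, h1, h2⟩
      simp only at h1 h2 ⊢
      have hm : ((a + b : ℤ) : ℝ) = (a:ℝ) + b := by push_cast; ring
      have hca : ⌈x * ((a + b : ℤ) : ℝ)⌉ = a := by
        rw [Int.ceil_eq_iff]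
        rw [hm]
        constructor <;> nlinarith
      apply Subtype.ext
      simp only [Prod.mk.injEq]
      exact ⟨hca, by rw [key (a + b), hca]; omega⟩
    · intro m
      simp only
      rw [key m]
      omega
end

section
/- Let x be a real number with 1/2 ≤ x < 1 and let (a,b) be integers. Then x < (1−x)·a − x·b ≤ 1 if and only if a = 1 + ⌊x(b+1)/(1−x)⌋; and x ≤ (1−x)·a − x·b < 1 if and only if a = ⌈x(b+1)/(1−x)⌉. -/
/-- characterizations of the extreme elements of S⁺ and S⁻. -/
theorem divide_and_conquer_extreme
    (x : ℝ) (hx1 : 1 / 2 ≤ x) (hx2 : x < 1) (a b : ℤ) :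
    ((x < (1 - x) * a - x * b ∧ (1 - x) * a - x * b ≤ 1) ↔
      a = 1 + ⌊x * (b + 1) / (1 - x)⌋) ∧
    ((x ≤ (1 - x) * a - x * b ∧ (1 - x) * a - x * b < 1) ↔
      a = ⌈x * (b + 1) / (1 - x)⌉) := by
  have h : (0:ℝ) < 1 - x := by linarith
  constructor
  · rw [show a = 1 + ⌊x * (b + 1) / (1 - x)⌋ ↔ ⌊x * (b + 1) / (1 - x)⌋ = a - 1 by omega,
      Int.floor_eq_iff]
    push_cast
    rw [le_div_iff₀ h, div_lt_iff₀ h]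
    constructor
    · rintro ⟨h1, h2⟩
      constructor <;> nlinarith
    · rintro ⟨h1, h2⟩
      constructor <;> nlinarith
  · rw [eq_comm, Int.ceil_eq_iff]
    push_cast
    rw [lt_div_iff₀ h, div_le_iff₀ h]
    constructor
    · rintro ⟨h1, h2⟩
      constructor <;> nlinarith
    · rintro ⟨h1, h2⟩
      constructor <;> nlinarith
end

section
/- Let k,l ≥ 2. A (k,l)-admissible word is a sequence (c_i)_{i≥1} of non-negative integers with finitely many nonzero terms, with c_i ≤ o_i + 1 where o_{2i-1} = l − 2 and o_{2i} = k − 2, and containing no forbidden pattern (i.e., no pair i < j with c_h = o_h + [h ∈ {i,j}] for all i ≤ h ≤ j). Then the map Γ sending (c_i) to ∑_{i≥1} c_i·a^{(k,l)}_i is a bijection from the set of (k,l)-admissible words to the non-negative integers, and its inverse is given by the greedy algorithm: for m with a^{(k,l)}_{n-1} ≤ m < a^{(k,l)}_n, set c_i = 0 for i ≥ n and recursively c_i = ⌊(m − ∑_{j=i+1}^{n-1} c_j·a^{(k,l)}_j)/a^{(k,l)}_i⌋. -/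
/-- The alternating coefficient sequence: `l - 2` at odd indices, `k - 2` at even ones. -/
def klCoeff (k l : ℕ) (i : ℕ) : ℕ := if i % 2 = 1 then l - 2 else k - 2

/-- A forbidden pattern in a word. -/
def Forbidden (k l : ℕ) (c : ℕ → ℕ) : Prop :=
  ∃ i j : ℕ, 1 ≤ i ∧ i < j ∧
    ∀ h : ℕ, i ≤ h → h ≤ j → c h = klCoeff k l h + (if h = i ∨ h = j then 1 else 0)

/-- The set of (k,l)-admissible words (indexed from 1; position 0 is unused). -/
def Admissible (k l : ℕ) : Set (ℕ → ℕ) :=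
  {c | c 0 = 0 ∧ (∃ N : ℕ, ∀ i : ℕ, N ≤ i → c i = 0) ∧
       (∀ i : ℕ, 1 ≤ i → c i ≤ klCoeff k l i + 1) ∧ ¬Forbidden k l c}

/-- The evaluation map of a word against the (k,l)-sequence. -/
noncomputable def Gamma (a : ℕ → ℤ) (c : ℕ → ℕ) : ℤ := ∑ᶠ i : ℕ, (c i : ℤ) * a i

namespace KLAux

structure Hyp (k l : ℕ) (a : ℕ → ℤ) : Prop where
  hk : 2 ≤ k
  hl : 2 ≤ l
  ha0 : a 0 = 0
  ha1 : a 1 = 1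
  arec : ∀ i : ℕ, 1 ≤ i → a (i + 1) = ((klCoeff k l i : ℤ) + 2) * a i - a (i - 1)

def G (a : ℕ → ℤ) (n : ℕ) (c : ℕ → ℕ) : ℤ := ∑ i ∈ Finset.Ico 1 n, (c i : ℤ) * a i

def S (k l : ℕ) (a : ℕ → ℤ) (n : ℕ) : ℤ := ∑ i ∈ Finset.Ico 1 n, (klCoeff k l i : ℤ) * a i

variable {k l : ℕ} {a : ℕ → ℤ}

theorem basic (h : Hyp k l a) : ∀ n, 0 ≤ a n ∧ a n + 1 ≤ a (n + 1) := by
  intro n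
  induction n with
  | zero => simp [h.ha0, h.ha1]
  | succ n ih =>
    have hr := h.arec (n + 1) (by omega)
    have hc : (0 : ℤ) ≤ (klCoeff k l (n + 1) : ℤ) := Int.natCast_nonneg _
    simp only [Nat.add_sub_cancel] at hr
    constructor
    · linarith [ih.1, ih.2]
    · nlinarith [ih.1, ih.2]

theorem a_nonneg (h : Hyp k l a) (n : ℕ) : 0 ≤ a n := (basic h n).1

theorem a_mono (h : Hyp k l a) {m n : ℕ} (hmn : m ≤ n) : a m ≤ a n := by
  induction n with
  | zero => simp_all
  | succ n ih =>
    rcases Nat.lt_or_ge m (n + 1) with h1 | h1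
    · exact le_trans (ih (by omega)) (by linarith [(basic h n).2])
    · have : m = n + 1 := by omega
      simp [this]

theorem a_pos (h : Hyp k l a) {n : ℕ} (hn : 1 ≤ n) : 1 ≤ a n := by
  have := a_mono h hn
  simp [h.ha1] at this; linarith

theorem a_ge (h : Hyp k l a) (n : ℕ) : (n : ℤ) ≤ a n := by
  induction n with
  | zero => simp [h.ha0]
  | succ n ih => push_cast; linarith [(basic h n).2]

theorem hS (h : Hyp k l a) : ∀ n : ℕ, a (n + 1) = a n + S k l a (n + 1) + 1 := by
  intro n
  induction n with
  | zero => simp [S, h.ha0, h.ha1]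
  | succ n ih =>
    have hr := h.arec (n + 1) (by omega)
    simp only [Nat.add_sub_cancel] at hr
    have hs : S k l a (n + 2) = S k l a (n + 1) + (klCoeff k l (n + 1) : ℤ) * a (n + 1) :=
      Finset.sum_Ico_succ_top (by omega) _
    rw [hr, hs]; linarith [ih]

theorem S_nonneg (h : Hyp k l a) (n : ℕ) : 0 ≤ S k l a n := by
  apply Finset.sum_nonneg
  intro i _
  exact mul_nonneg (Int.natCast_nonneg _) (a_nonneg h i)

theorem S_succ (hn : 1 ≤ n) : S k l a (n + 1) = S k l a n + (klCoeff k l n : ℤ) * a n :=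
  Finset.sum_Ico_succ_top (by omega) _

theorem S_le (h : Hyp k l a) {n : ℕ} (hn : 1 ≤ n) : S k l a n ≤ a n - 1 := by
  obtain ⟨m, rfl⟩ := Nat.exists_eq_add_of_le hn
  have := hS h m
  have := a_nonneg h m
  simp only [Nat.add_comm 1 m] at *
  linarith

theorem G_nonneg (h : Hyp k l a) (n : ℕ) (c : ℕ → ℕ) : 0 ≤ G a n c := by
  apply Finset.sum_nonneg
  intro i _
  exact mul_nonneg (Int.natCast_nonneg _) (a_nonneg h i)

theorem Gamma_eq_G (h : Hyp k l a) {c : ℕ → ℕ} (hc0 : c 0 = 0) {N : ℕ}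
    (hN : ∀ i, N ≤ i → c i = 0) : Gamma a c = G a N c := by
  apply finsum_eq_sum_of_support_subset
  intro i hi
  simp only [Function.mem_support] at hi
  simp only [Finset.coe_Ico, Set.mem_Ico]
  constructor
  · by_contra h0
    have : i = 0 := by omega
    subst this; simp [hc0] at hi
  · by_contra h0
    rw [hN i (by omega)] at hi; simp at hi

theorem coeff_bound_int (h : Hyp k l a) {c : ℕ → ℕ} (hc : c ∈ Admissible k l) {i : ℕ}
    (hi : 1 ≤ i) : (c i : ℤ) ≤ (klCoeff k l i : ℤ) + 1 := by
  exact_mod_cast hc.2.2.1 i hi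

theorem M (h : Hyp k l a) : ∀ n, 1 ≤ n → ∀ c ∈ Admissible k l, G a n c < a n := by
  intro n
  induction n using Nat.strong_induction_on with
  | _ n ih =>
    intro hn c hc
    match n, hn with
    | 1, _ => simp [G, h.ha1]
    | (n+2), _ =>
      obtain ⟨hc0, hbd, hle, hnf⟩ := hc
      have hsplit : G a (n + 2) c = G a (n + 1) c + (c (n + 1) : ℤ) * a (n + 1) :=
        Finset.sum_Ico_succ_top (by omega) _
      have hprev : G a (n + 1) c < a (n + 1) := ih (n + 1) (by omega) (by omega) c
        ⟨hc0, hbd, hle, hnf⟩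
      have haS : a (n + 2) = a (n + 1) + S k l a (n + 2) + 1 := hS h (n + 1)
      have hSsucc : S k l a (n + 2) = S k l a (n + 1) + (klCoeff k l (n + 1) : ℤ) * a (n + 1) :=
        S_succ (by omega)
      have hS1 : 0 ≤ S k l a (n + 1) := S_nonneg h _
      have han1 : 0 ≤ a (n + 1) := a_nonneg h _
      rcases Nat.lt_or_ge (c (n + 1)) (klCoeff k l (n + 1) + 1) with htop | htop
      · -- c (n+1) ≤ klCoeff (n+1)
        have h1 : (c (n + 1) : ℤ) ≤ (klCoeff k l (n + 1) : ℤ) := by exact_mod_cast Nat.lt_succ_iff.mp htop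
        have h2 : (c (n + 1) : ℤ) * a (n + 1) ≤ (klCoeff k l (n + 1) : ℤ) * a (n + 1) :=
          mul_le_mul_of_nonneg_right h1 han1
        linarith
      · -- c (n+1) = klCoeff (n+1) + 1
        have heq : c (n + 1) = klCoeff k l (n + 1) + 1 :=
          le_antisymm (hle (n + 1) (by omega)) htop
        have heqz : (c (n + 1) : ℤ) = (klCoeff k l (n + 1) : ℤ) + 1 := by exact_mod_cast heq
        by_cases hall : ∀ x, 1 ≤ x → x < n + 1 → c x = klCoeff k l x
        · have hGeq : G a (n + 1) c = S k l a (n + 1) := by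
            apply Finset.sum_congr rfl
            intro x hx
            simp only [Finset.mem_Ico] at hx
            rw [hall x hx.1 hx.2]
          rw [hsplit, hGeq, heqz]
          linarith
        · push_neg at hall
          set T := (Finset.Ico 1 (n + 1)).filter (fun x => c x ≠ klCoeff k l x) with hT
          have hTne : T.Nonempty := by
            obtain ⟨x, hx1, hx2, hx3⟩ := hall
            exact ⟨x, by simp [hT, Finset.mem_filter, Finset.mem_Ico]; omega⟩
          set t := T.max' hTne with ht
          have htmem : t ∈ T := T.max'_mem hTne
          simp only [hT, Finset.mem_filter, Finset.mem_Ico] at htmem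
          obtain ⟨⟨ht1, ht2⟩, ht3⟩ := htmem
          have hmax : ∀ x, t < x → x < n + 1 → c x = klCoeff k l x := by
            intro x hx1 hx2
            by_contra hne
            have : x ∈ T := by simp [hT, Finset.mem_filter, Finset.mem_Ico]; omega
            have := T.le_max' x this
            omega
          have hct : (c t : ℤ) ≤ (klCoeff k l t : ℤ) - 1 := by
            have hb := hle t (by omega)
            by_cases hq : c t = klCoeff k l t + 1
            · exfalso
              apply hnf
              refine ⟨t, n + 1, by omega, by omega, ?_⟩
              intro x hx1 hx2
              rcases Nat.lt_or_ge x (n + 1) with hx3 | hx3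
              · rcases Nat.eq_or_lt_of_le hx1 with rfl | hx4
                · simp [hq]
                · have := hmax x hx4 hx3
                  rw [if_neg (by omega)]
                  omega
              · have : x = n + 1 := by omega
                subst this
                simp [heq]
            · have : c t < klCoeff k l t := by omega
              omega
          -- sum decomposition
          have e1 : G a (n + 1) c = G a (t + 1) c + ∑ i ∈ Finset.Ico (t + 1) (n + 1), (c i : ℤ) * a i :=
            (Finset.sum_Ico_consecutive _ (by omega) (by omega)).symm
          have e2 : ∑ i ∈ Finset.Ico (t + 1) (n + 1), (c i : ℤ) * a i
              = ∑ i ∈ Finset.Ico (t + 1) (n + 1), (klCoeff k l i : ℤ) * a i := by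
            apply Finset.sum_congr rfl
            intro x hx
            simp only [Finset.mem_Ico] at hx
            rw [hmax x hx.1 hx.2]
          have e3 : S k l a (t + 1) + ∑ i ∈ Finset.Ico (t + 1) (n + 1), (klCoeff k l i : ℤ) * a i
              = S k l a (n + 1) := Finset.sum_Ico_consecutive _ (by omega) (by omega)
          have e4 : G a (t + 1) c = G a t c + (c t : ℤ) * a t :=
            Finset.sum_Ico_succ_top (by omega) _
          have e5 : S k l a (t + 1) = S k l a t + (klCoeff k l t : ℤ) * a t := S_succ ht1
          have h6 : G a t c < a t := ih t (by omega) ht1 c ⟨hc0, hbd, hle, hnf⟩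
          have hat : 0 ≤ a t := a_nonneg h t
          have h7 : (c t : ℤ) * a t ≤ ((klCoeff k l t : ℤ) - 1) * a t :=
            mul_le_mul_of_nonneg_right hct hat
          have hSt : 0 ≤ S k l a t := S_nonneg h t
          nlinarith [heqz]

theorem Z (h : Hyp k l a) {c : ℕ → ℕ} (hc : c ∈ Admissible k l) {n : ℕ}
    (hlt : Gamma a c < a n) : ∀ i, n ≤ i → c i = 0 := by
  intro i hi
  by_contra hne
  obtain ⟨hc0, ⟨N, hN⟩, hle, hnf⟩ := hc
  set N' := max N (i + 1) with hN'
  have hG : Gamma a c = G a N' c := Gamma_eq_G h hc0 (fun j hj => hN j (by omega))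
  have hi1 : 1 ≤ i := by
    by_contra h0
    have : i = 0 := by omega
    subst this; exact hne hc0
  have hmem : i ∈ Finset.Ico 1 N' := by simp [Finset.mem_Ico]; omega
  have hsingle : (c i : ℤ) * a i ≤ G a N' c :=
    Finset.single_le_sum (fun j _ => mul_nonneg (Int.natCast_nonneg _) (a_nonneg h j)) hmem
  have h1 : a i ≤ (c i : ℤ) * a i := by
    have : (1 : ℤ) ≤ (c i : ℤ) := by exact_mod_cast Nat.one_le_iff_ne_zero.mpr hne
    nlinarith [a_nonneg h i]
  have h2 : a n ≤ a i := a_mono h hi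
  linarith [hG ▸ hlt]

theorem key (h : Hyp k l a) {c d : ℕ → ℕ} (hc : c ∈ Admissible k l) (hd : d ∈ Admissible k l)
    {N : ℕ} (hNc : ∀ i, N ≤ i → c i = 0) (hNd : ∀ i, N ≤ i → d i = 0)
    {j : ℕ} (hj1 : 1 ≤ j) (hjd : d j < c j) (hagree : ∀ i, j < i → c i = d i) :
    G a N d < G a N c := by
  have hjN : j < N := by
    by_contra h0
    have := hNc j (by omega)
    have := hNd j (by omega)
    omega
  have ec : G a N c = G a (j + 1) c + ∑ i ∈ Finset.Ico (j + 1) N, (c i : ℤ) * a i :=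
    (Finset.sum_Ico_consecutive _ (by omega) (by omega)).symm
  have ed : G a N d = G a (j + 1) d + ∑ i ∈ Finset.Ico (j + 1) N, (d i : ℤ) * a i :=
    (Finset.sum_Ico_consecutive _ (by omega) (by omega)).symm
  have etail : ∑ i ∈ Finset.Ico (j + 1) N, (c i : ℤ) * a i
      = ∑ i ∈ Finset.Ico (j + 1) N, (d i : ℤ) * a i := by
    apply Finset.sum_congr rfl
    intro x hx
    simp only [Finset.mem_Ico] at hx
    rw [hagree x hx.1]
  have ecj : G a (j + 1) c = G a j c + (c j : ℤ) * a j := Finset.sum_Ico_succ_top (by omega) _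
  have edj : G a (j + 1) d = G a j d + (d j : ℤ) * a j := Finset.sum_Ico_succ_top (by omega) _
  have h1 : G a j d < a j := M h j hj1 d hd
  have h2 : 0 ≤ G a j c := G_nonneg h j c
  have h3 : ((d j : ℤ) + 1) * a j ≤ (c j : ℤ) * a j := by
    apply mul_le_mul_of_nonneg_right _ (a_nonneg h j)
    exact_mod_cast hjd
  linarith

theorem inj (h : Hyp k l a) : ∀ c ∈ Admissible k l, ∀ d ∈ Admissible k l,
    Gamma a c = Gamma a d → c = d := by
  intro c hc d hd hcd
  by_contra hne
  obtain ⟨Nc, hNc⟩ := hc.2.1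
  obtain ⟨Nd, hNd⟩ := hd.2.1
  set N := max Nc Nd with hN
  have hNc' : ∀ i, N ≤ i → c i = 0 := fun i hi => hNc i (by omega)
  have hNd' : ∀ i, N ≤ i → d i = 0 := fun i hi => hNd i (by omega)
  set T := (Finset.Ico 1 N).filter (fun i => c i ≠ d i) with hT
  have hTne : T.Nonempty := by
    by_contra h0
    apply hne
    funext i
    rcases Nat.eq_zero_or_pos i with rfl | hi
    · rw [hc.1, hd.1]
    · rcases Nat.lt_or_ge i N with h1 | h1
      · by_contra h2
        exact h0 ⟨i, by simp [hT, Finset.mem_filter, Finset.mem_Ico]; omega⟩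
      · rw [hNc' i h1, hNd' i h1]
  set j := T.max' hTne with hj
  have hjmem : j ∈ T := T.max'_mem hTne
  simp only [hT, Finset.mem_filter, Finset.mem_Ico] at hjmem
  obtain ⟨⟨hj1, hj2⟩, hj3⟩ := hjmem
  have hagree : ∀ i, j < i → c i = d i := by
    intro i hi
    by_contra h0
    rcases Nat.lt_or_ge i N with h1 | h1
    · have : i ∈ T := by simp [hT, Finset.mem_filter, Finset.mem_Ico]; omega
      have := T.le_max' i this
      omega
    · rw [hNc' i h1, hNd' i h1] at h0; exact h0 rfl
  have hGc : Gamma a c = G a N c := Gamma_eq_G h hc.1 hNc'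
  have hGd : Gamma a d = G a N d := Gamma_eq_G h hd.1 hNd'
  rcases Nat.lt_or_ge (d j) (c j) with hlt | hge
  · have := key h hc hd hNc' hNd' hj1 hlt hagree
    rw [hGc, hGd] at hcd; omega
  · have hlt : c j < d j := by omega
    have := key h hd hc hNd' hNc' hj1 hlt (fun i hi => (hagree i hi).symm)
    rw [hGc, hGd] at hcd; omega

theorem zero_admissible (hk : 2 ≤ k) (hl : 2 ≤ l) : (fun _ : ℕ => 0) ∈ Admissible k l := by
  refine ⟨rfl, ⟨0, fun _ _ => rfl⟩, fun i _ => Nat.zero_le _, ?_⟩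
  rintro ⟨i, j, hi1, hij, hf⟩
  have h1 := hf i le_rfl (by omega)
  rw [if_pos (Or.inl rfl)] at h1
  simp at h1

theorem surj (h : Hyp k l a) : ∀ M : ℕ, ∃ c ∈ Admissible k l, Gamma a c = (M : ℤ) := by
  intro M
  induction M using Nat.strong_induction_on with
  | _ M ih =>
    rcases Nat.eq_zero_or_pos M with rfl | hM
    · refine ⟨fun _ => 0, zero_admissible h.hk h.hl, ?_⟩
      simp [Gamma]
    · have hex : ∃ n, (M : ℤ) < a n := ⟨M + 1, by
        have := a_ge h (M + 1)
        push_cast at this ⊢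
        linarith⟩
      set n := Nat.find hex with hn
      have hspec : (M : ℤ) < a n := Nat.find_spec hex
      have hn2 : 2 ≤ n := by
        by_contra h0
        interval_cases n
        · rw [h.ha0] at hspec; omega
        · rw [h.ha1] at hspec; omega
      have hge : a (n - 1) ≤ (M : ℤ) := by
        have := Nat.find_min hex (m := n - 1) (by omega)
        omega
      set j := n - 1 with hjdef
      have hj1 : 1 ≤ j := by omega
      have hjn : j + 1 = n := by omega
      have hspec' : (M : ℤ) < a (j + 1) := by rw [hjn]; exact hspec
      have haj : 0 < a j := a_pos h hj1
      set q := (M : ℤ) / a j with hq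
      set r := (M : ℤ) % a j with hr
      have heq : a j * q + r = M := Int.mul_ediv_add_emod _ _
      have hr0 : 0 ≤ r := Int.emod_nonneg _ (by omega)
      have hrlt : r < a j := Int.emod_lt_of_pos _ haj
      have hq1 : 1 ≤ q := by
        rw [hq]
        rw [Int.le_ediv_iff_mul_le haj]
        linarith
      have hSj : S k l a j ≤ a j - 1 := S_le h hj1
      have haSj : a (j + 1) = a j + S k l a (j + 1) + 1 := hS h j
      have hSjs : S k l a (j + 1) = S k l a j + (klCoeff k l j : ℤ) * a j := S_succ hj1
      have hqle : q ≤ (klCoeff k l j : ℤ) + 1 := by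
        have hexp : ((klCoeff k l j : ℤ) + 2) * a j = (klCoeff k l j : ℤ) * a j + 2 * a j := by
          ring
        have : q < (klCoeff k l j : ℤ) + 2 := by
          rw [hq, Int.ediv_lt_iff_lt_mul haj]
          linarith
        omega
      have hrM : r.toNat < M := by omega
      obtain ⟨d, hd, hgd⟩ := ih r.toNat hrM
      rw [Int.toNat_of_nonneg hr0] at hgd
      have hdz : ∀ i, j ≤ i → d i = 0 := Z h hd (by omega : Gamma a d < a j)
      set c : ℕ → ℕ := fun i => if i = j then q.toNat else d i with hc
      have hcj : (c j : ℤ) = q := by simp [hc, Int.toNat_of_nonneg (by omega : 0 ≤ q)]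
      have hcne : ∀ i, i ≠ j → c i = d i := by intro i hi; simp [hc, hi]
      have hcz : ∀ i, j + 1 ≤ i → c i = 0 := by
        intro i hi
        rw [hcne i (by omega)]
        exact hdz i (by omega)
      have hc0 : c 0 = 0 := by rw [hcne 0 (by omega)]; exact hd.1
      have hGjd : Gamma a d = G a j d := Gamma_eq_G h hd.1 hdz
      refine ⟨c, ⟨hc0, ⟨j + 1, hcz⟩, ?_, ?_⟩, ?_⟩
      · -- digit bounds
        intro i hi
        by_cases hij : i = j
        · rw [hij]
          have : (c j : ℤ) ≤ (klCoeff k l j : ℤ) + 1 := by rw [hcj]; exact hqle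
          exact_mod_cast this
        · rw [hcne i hij]; exact hd.2.2.1 i hi
      · -- no forbidden pattern
        rintro ⟨i, jj, hi1, hij, hf⟩
        have hfjj := hf jj (by omega) le_rfl
        rw [if_pos (Or.inr rfl)] at hfjj
        have hjjle : jj ≤ j := by
          by_contra h0
          rw [hcz jj (by omega)] at hfjj
          omega
        rcases Nat.lt_or_ge jj j with hjlt | hjge
        · -- pattern entirely below j : forbidden for d
          apply hd.2.2.2
          refine ⟨i, jj, hi1, hij, ?_⟩
          intro x hx1 hx2
          rw [← hcne x (by omega)]
          exact hf x hx1 hx2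
        · have hjj : jj = j := by omega
          subst hjj
          -- top digit maximal, derive numeric contradiction
          have hqmax : q = (klCoeff k l j : ℤ) + 1 := by
            rw [← hcj, hfjj]; push_cast; ring
          have hfi := hf i le_rfl (by omega)
          rw [if_pos (Or.inl rfl)] at hfi
          have hdi : d i = klCoeff k l i + 1 := by rw [← hcne i (by omega)]; exact hfi
          have hmid : ∀ x, i < x → x < j → d x = klCoeff k l x := by
            intro x hx1 hx2
            have := hf x (by omega) (by omega)
            rw [if_neg (by omega)] at this
            rw [← hcne x (by omega)]; omega
          -- lower bound on r = G a j d
          have hsub : ∑ x ∈ Finset.Ico i j, (d x : ℤ) * a x ≤ G a j d := by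
            apply Finset.sum_le_sum_of_subset_of_nonneg
            · apply Finset.Ico_subset_Ico (by omega) le_rfl
            · intro x _ _
              exact mul_nonneg (Int.natCast_nonneg _) (a_nonneg h x)
          have hij' : i < j := hij
          have esplit : ∑ x ∈ Finset.Ico i j, (d x : ℤ) * a x
              = (d i : ℤ) * a i + ∑ x ∈ Finset.Ico (i + 1) j, (d x : ℤ) * a x := by
            rw [← Finset.sum_Ico_consecutive _ (by omega : i ≤ i + 1) (by omega : i + 1 ≤ j)]
            simp
          have emid : ∑ x ∈ Finset.Ico (i + 1) j, (d x : ℤ) * a x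
              = ∑ x ∈ Finset.Ico (i + 1) j, (klCoeff k l x : ℤ) * a x := by
            apply Finset.sum_congr rfl
            intro x hx
            simp only [Finset.mem_Ico] at hx
            rw [hmid x hx.1 hx.2]
          have eS : S k l a (i + 1) + ∑ x ∈ Finset.Ico (i + 1) j, (klCoeff k l x : ℤ) * a x
              = S k l a j := Finset.sum_Ico_consecutive _ (by omega) (by omega)
          have hSi : S k l a (i + 1) = S k l a i + (klCoeff k l i : ℤ) * a i := S_succ hi1
          have hSile : S k l a i ≤ a i - 1 := S_le h hi1
          have hdiz : (d i : ℤ) = (klCoeff k l i : ℤ) + 1 := by rw [hdi]; push_cast; ring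
          -- r ≤ S j
          have hexp1 : a j * q = (klCoeff k l j : ℤ) * a j + a j := by rw [hqmax]; ring
          have hrS : r ≤ S k l a j := by linarith
          have hexp2 : (d i : ℤ) * a i = (klCoeff k l i : ℤ) * a i + a i := by
            rw [hdiz]; ring
          rw [← hGjd, hgd] at hsub
          linarith
      · -- Gamma value
        have hGc : Gamma a c = G a (j + 1) c := Gamma_eq_G h hc0 hcz
        have hsplit : G a (j + 1) c = G a j c + (c j : ℤ) * a j := Finset.sum_Ico_succ_top (by omega) _
        have hGjc : G a j c = G a j d := by
          apply Finset.sum_congr rfl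
          intro x hx
          simp only [Finset.mem_Ico] at hx
          rw [hcne x (by omega)]
        rw [hGc, hsplit, hGjc, hcj, ← hGjd, hgd]
        linarith

end KLAux

/-- Γ is a bijection from (k,l)-admissible words to ℤ≥0, with greedy inverse. -/
theorem gamma_bijection_greedy
    (k l : ℕ) (hk : 2 ≤ k) (hl : 2 ≤ l)
    (a : ℕ → ℤ)
    (ha0 : a 0 = 0) (ha1 : a 1 = 1)
    (haeven : ∀ n : ℕ, a (2 * n + 2) = (l : ℤ) * a (2 * n + 1) - a (2 * n))
    (haodd : ∀ n : ℕ, a (2 * n + 3) = (k : ℤ) * a (2 * n + 2) - a (2 * n + 1)) :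
    Set.BijOn (Gamma a) (Admissible k l) {m : ℤ | 0 ≤ m} ∧
    ∀ m : ℤ, ∀ n : ℕ, 1 ≤ n → a (n - 1) ≤ m → m < a n →
      ∀ c ∈ Admissible k l, Gamma a c = m →
        (∀ i : ℕ, n ≤ i → c i = 0) ∧
        ∀ i : ℕ, 1 ≤ i → i < n →
          (c i : ℤ) = (m - ∑ j ∈ Finset.Ico (i + 1) n, (c j : ℤ) * a j) / a i := by
  have hcast : ∀ i : ℕ, (klCoeff k l i : ℤ) = if i % 2 = 1 then (l : ℤ) - 2 else (k : ℤ) - 2 := by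
    intro i; unfold klCoeff; split <;> omega
  have hyp : KLAux.Hyp k l a := by
    refine ⟨hk, hl, ha0, ha1, ?_⟩
    intro i hi
    rcases Nat.even_or_odd i with he | ho
    · obtain ⟨m, hm⟩ := he
      have hm1 : 1 ≤ m := by omega
      obtain ⟨p, hp⟩ := Nat.exists_eq_add_of_le hm1
      have h2 : i = 2 * p + 2 := by omega
      subst h2
      have e1 : 2 * p + 2 - 1 = 2 * p + 1 := by omega
      have e2 : 2 * p + 2 + 1 = 2 * p + 3 := by omega
      rw [e1, e2, hcast, if_neg (by omega), haodd p]
      ring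
    · obtain ⟨m, hm⟩ := ho
      have h2 : i = 2 * m + 1 := by omega
      subst h2
      have e1 : 2 * m + 1 - 1 = 2 * m := by omega
      have e2 : 2 * m + 1 + 1 = 2 * m + 2 := by omega
      rw [e1, e2, hcast, if_pos (by omega), haeven m]
      ring
  constructor
  · refine ⟨?_, ?_, ?_⟩
    · intro c hc
      obtain ⟨N, hN⟩ := hc.2.1
      have hG := KLAux.Gamma_eq_G hyp hc.1 hN
      simp only [Set.mem_setOf_eq]
      rw [hG]
      exact KLAux.G_nonneg hyp N c
    · intro c hc d hd hcd
      exact KLAux.inj hyp c hc d hd hcd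
    · intro m hm
      obtain ⟨c, hc, hgc⟩ := KLAux.surj hyp m.toNat
      exact ⟨c, hc, by rw [hgc, Int.toNat_of_nonneg hm]⟩
  · intro m n hn hlow hup c hc hgc
    have hz : ∀ i, n ≤ i → c i = 0 := KLAux.Z hyp hc (by rw [hgc]; exact hup)
    refine ⟨hz, ?_⟩
    intro i hi1 hin
    have hmG : m = KLAux.G a n c := by
      rw [← hgc]; exact KLAux.Gamma_eq_G hyp hc.1 hz
    have hsplit : KLAux.G a (i + 1) c + ∑ jj ∈ Finset.Ico (i + 1) n, (c jj : ℤ) * a jj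
        = KLAux.G a n c := Finset.sum_Ico_consecutive _ (by omega) (by omega)
    have htop : KLAux.G a (i + 1) c = KLAux.G a i c + (c i : ℤ) * a i :=
      Finset.sum_Ico_succ_top (by omega) _
    have h1 : 0 ≤ KLAux.G a i c := KLAux.G_nonneg hyp i c
    have h2 : KLAux.G a i c < a i := KLAux.M hyp i hi1 c hc
    have hane : a i ≠ 0 := by
      have := KLAux.a_pos hyp hi1; omega
    have hrw : m - ∑ jj ∈ Finset.Ico (i + 1) n, (c jj : ℤ) * a jj
        = KLAux.G a i c + (c i : ℤ) * a i := by
      rw [hmG, ← hsplit, htop]; ring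
    rw [hrw, Int.add_mul_ediv_right _ _ hane, Int.ediv_eq_zero_of_lt h1 h2, zero_add]
end

section
/- Let k,l ≥ 2 and let (w_i)_{i≥1} be a strictly increasing sequence of non-negative real numbers satisfying w_{i-1} + w_{i+1} = (o_i + 2)·w_i with o_{2i-1} = l − 2, o_{2i} = k − 2 (setting w_0 appropriately). For (k,l)-admissible words (c_i) and (d_i), one has (c_i) ≺ (d_i) in the order where (c_i) ≺ (d_i) iff there exists n with c_n < d_n and c_i = d_i for all i > n, if and only if ∑ c_i·w_i < ∑ d_i·w_i. In particular the map (c_i) ↦ ∑ c_i·w_i is injective on (k,l)-admissible words. -/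
/-- The order `≺`: words compared at the highest index of disagreement. -/
def Prec (c d : ℕ → ℕ) : Prop := ∃ n : ℕ, c n < d n ∧ ∀ i : ℕ, n < i → c i = d i

/-- Telescoping identity for sums of `klCoeff h * w h`. -/
lemma kl_tele (k l : ℕ) (w : ℕ → ℝ)
    (hrec : ∀ i : ℕ, 1 ≤ i → w (i - 1) + w (i + 1) = ((klCoeff k l i : ℝ) + 2) * w i)
    (t : ℕ) (ht : 1 ≤ t) :
    ∀ u : ℕ, t ≤ u → ∑ h ∈ Finset.Ico t u, (klCoeff k l h : ℝ) * w h
      = (w u - w (u - 1)) - (w t - w (t - 1)) := by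
  intro u hu
  induction u, hu using Nat.le_induction with
  | base => simp
  | succ u hu ih =>
    rw [Finset.sum_Ico_succ_top hu, ih]
    have e := hrec u (le_trans ht hu)
    rw [add_mul] at e
    simp only [Nat.add_sub_cancel]
    linarith

/-- Key lemma: the weighted partial sum of an admissible word below `n` is less than `w n`. -/
lemma kl_key_s14 (k l : ℕ) (w : ℕ → ℝ) (hw0 : ∀ i : ℕ, 0 ≤ w i) (hmono : StrictMono w)
    (hrec : ∀ i : ℕ, 1 ≤ i → w (i - 1) + w (i + 1) = ((klCoeff k l i : ℝ) + 2) * w i) :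
    ∀ n : ℕ, 1 ≤ n → ∀ c ∈ Admissible k l,
      ∑ i ∈ Finset.range n, (c i : ℝ) * w i < w n := by
  intro n
  induction n using Nat.strong_induction_on with
  | _ n IH =>
  intro hn c hc
  obtain ⟨h0, hfin, hb, hf⟩ := hc
  have hwlt : ∀ a b : ℕ, a < b → w a < w b := fun a b hab => hmono hab
  rcases Nat.lt_or_ge n 2 with h2 | h2
  · have hn1 : n = 1 := by omega
    subst hn1
    simp only [Finset.range_one, Finset.sum_singleton, h0, Nat.cast_zero, zero_mul]
    exact lt_of_le_of_lt (hw0 0) (hwlt 0 1 one_pos)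
  · set m := n - 1 with hm
    have hnm : n = m + 1 := by omega
    have hm1 : 1 ≤ m := by omega
    have IHm : ∑ i ∈ Finset.range m, (c i : ℝ) * w i < w m :=
      IH m (by omega) hm1 c ⟨h0, hfin, hb, hf⟩
    rw [hnm, Finset.sum_range_succ]
    have erec := hrec m hm1
    rw [add_mul] at erec
    rcases Nat.lt_or_ge (c m) (klCoeff k l m + 1) with hcm | hcm
    · -- c m ≤ klCoeff m
      have h1 : (c m : ℝ) ≤ (klCoeff k l m : ℝ) := by
        exact_mod_cast Nat.lt_succ_iff.mp hcm
      have h2' : (c m : ℝ) * w m ≤ (klCoeff k l m : ℝ) * w m :=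
        mul_le_mul_of_nonneg_right h1 (hw0 m)
      have h3 : w (m - 1) < w m := hwlt (m - 1) m (by omega)
      linarith
    · -- c m = klCoeff m + 1
      have hcm' : c m = klCoeff k l m + 1 := le_antisymm (hb m hm1) hcm
      classical
      have hex : ∃ t : ℕ, 1 ≤ t ∧ ∀ h : ℕ, t ≤ h → h < m → c h = klCoeff k l h :=
        ⟨m, hm1, fun h h1 h2 => absurd h2 (by omega)⟩
      set t := Nat.find hex with htdef
      obtain ⟨ht1, hrun⟩ : 1 ≤ t ∧ ∀ h : ℕ, t ≤ h → h < m → c h = klCoeff k l h :=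
        Nat.find_spec hex
      have htm : t ≤ m := Nat.find_le ⟨hm1, fun h h1 h2 => absurd h2 (by omega)⟩
      -- split the sum
      have hsplit : ∑ i ∈ Finset.range m, (c i : ℝ) * w i
          = ∑ i ∈ Finset.range t, (c i : ℝ) * w i
            + ∑ h ∈ Finset.Ico t m, (c h : ℝ) * w h := by
        rw [← Nat.Ico_zero_eq_range, ← Finset.sum_Ico_consecutive _ (Nat.zero_le t) htm,
          Nat.Ico_zero_eq_range]
      have hIco : ∑ h ∈ Finset.Ico t m, (c h : ℝ) * w h
          = (w m - w (m - 1)) - (w t - w (t - 1)) := by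
        have hcongr : ∀ h ∈ Finset.Ico t m, (c h : ℝ) * w h = (klCoeff k l h : ℝ) * w h := by
          intro h hh
          rw [Finset.mem_Ico] at hh
          rw [hrun h hh.1 hh.2]
        rw [Finset.sum_congr rfl hcongr]
        exact kl_tele k l w hrec t ht1 m htm
      have hcmw : (c m : ℝ) * w m = (klCoeff k l m : ℝ) * w m + w m := by
        rw [hcm']; push_cast; ring
      rw [hsplit, hIco, hcmw]
      -- bound the head sum: ∑ i ∈ range t, c i * w i < w t - w (t-1)
      have hhead : ∑ i ∈ Finset.range t, (c i : ℝ) * w i < w t - w (t - 1) := by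
        rcases Nat.lt_or_ge t 2 with ht2 | ht2
        · have ht1'' : t = 1 := by omega
          rw [ht1'']
          simp only [Finset.range_one, Finset.sum_singleton, h0, Nat.cast_zero, zero_mul,
            Nat.sub_self]
          have := hwlt 0 1 one_pos
          linarith
        · -- t ≥ 2 : c (t-1) < klCoeff (t-1)
          have hne1 : c (t - 1) ≠ klCoeff k l (t - 1) := by
            intro heq
            have := Nat.find_min hex (m := t - 1) (by omega)
            apply this
            refine ⟨by omega, fun h h1 h2 => ?_⟩
            rcases Nat.lt_or_ge h t with hht | hht
            · have : h = t - 1 := by omega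
              rw [this]; exact heq
            · exact hrun h hht h2
          have hne2 : c (t - 1) ≠ klCoeff k l (t - 1) + 1 := by
            intro heq
            apply hf
            refine ⟨t - 1, m, by omega, by omega, fun h h1 h2 => ?_⟩
            by_cases hh1 : h = t - 1
            · subst hh1
              simp only [true_or, if_pos, heq]
            · by_cases hh2 : h = m
              · subst hh2
                rw [if_pos (Or.inr rfl), hcm']
              · rw [if_neg (by tauto), add_zero]
                exact hrun h (by omega) (by omega)
          have hlt : c (t - 1) < klCoeff k l (t - 1) := by
            have := hb (t - 1) (by omega)
            omega
          have ht1' : t = (t - 1) + 1 := by omega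
          have IHt : ∑ i ∈ Finset.range (t - 1), (c i : ℝ) * w i < w (t - 1) :=
            IH (t - 1) (by omega) (by omega) c ⟨h0, hfin, hb, hf⟩
          have hcast : (c (t - 1) : ℝ) + 1 ≤ (klCoeff k l (t - 1) : ℝ) := by
            exact_mod_cast hlt
          have e1 : ((c (t - 1) : ℝ) + 1) * w (t - 1)
              ≤ (klCoeff k l (t - 1) : ℝ) * w (t - 1) :=
            mul_le_mul_of_nonneg_right hcast (hw0 (t - 1))
          rw [add_mul, one_mul] at e1
          have e2 := hrec (t - 1) (by omega)
          rw [add_mul] at e2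
          have e3 : w (t - 1 - 1) < w (t - 1) := hwlt (t - 1 - 1) (t - 1) (by omega)
          have e4 : t - 1 + 1 = t := by omega
          rw [e4] at e2
          calc ∑ i ∈ Finset.range t, (c i : ℝ) * w i
              = ∑ i ∈ Finset.range (t - 1), (c i : ℝ) * w i
                + (c (t - 1) : ℝ) * w (t - 1) := by
                  conv_lhs => rw [ht1']
                  exact Finset.sum_range_succ _ (t - 1)
            _ < w t - w (t - 1) := by linarith
      linarith

/-- Finsums over finitely supported words are finite range sums. -/
lemma kl_finsum_eq (w : ℕ → ℝ) (c : ℕ → ℕ) {N M : ℕ} (hN : ∀ i : ℕ, N ≤ i → c i = 0)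
    (hNM : N ≤ M) :
    ∑ᶠ i : ℕ, (c i : ℝ) * w i = ∑ i ∈ Finset.range M, (c i : ℝ) * w i := by
  apply finsum_eq_sum_of_support_subset
  intro i hi
  simp only [Function.mem_support] at hi
  simp only [Finset.coe_range, Set.mem_Iio]
  by_contra hiM
  have : c i = 0 := hN i (by omega)
  rw [this] at hi
  simp at hi

/-- Forward direction: `Prec c d` implies the weighted sum of `c` is smaller. -/
lemma kl_forward (k l : ℕ) (w : ℕ → ℝ) (hw0 : ∀ i : ℕ, 0 ≤ w i) (hmono : StrictMono w)
    (hrec : ∀ i : ℕ, 1 ≤ i → w (i - 1) + w (i + 1) = ((klCoeff k l i : ℝ) + 2) * w i)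
    {c d : ℕ → ℕ} (hc : c ∈ Admissible k l) (hd : d ∈ Admissible k l)
    (hp : Prec c d) : ∑ᶠ i : ℕ, (c i : ℝ) * w i < ∑ᶠ i : ℕ, (d i : ℝ) * w i := by
  obtain ⟨n, hn, hab⟩ := hp
  obtain ⟨hc0, ⟨Nc, hNc⟩, hcb, hcf⟩ := hc
  obtain ⟨hd0, ⟨Nd, hNd⟩, hdb, hdf⟩ := hd
  have hn1 : 1 ≤ n := by
    by_contra h
    have : n = 0 := by omega
    rw [this, hc0, hd0] at hn
    exact lt_irrefl 0 hn
  set M := max (max Nc Nd) (n + 1) with hM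
  rw [kl_finsum_eq w c hNc (le_trans (le_max_left Nc Nd) (le_max_left _ _)),
    kl_finsum_eq w d hNd (le_trans (le_max_right Nc Nd) (le_max_left _ _))]
  have key1 : ∑ i ∈ Finset.range n, (c i : ℝ) * w i < w n :=
    kl_key_s14 k l w hw0 hmono hrec n hn1 c ⟨hc0, ⟨Nc, hNc⟩, hcb, hcf⟩
  have hsub : ∑ i ∈ Finset.range M, ((d i : ℝ) * w i - (c i : ℝ) * w i)
      = ∑ i ∈ Finset.range (n + 1), ((d i : ℝ) * w i - (c i : ℝ) * w i) := by
    symm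
    apply Finset.sum_subset (Finset.range_subset_range.mpr (le_max_right _ _))
    intro i _ hi
    rw [Finset.mem_range] at hi
    rw [hab i (by omega)]
    ring
  have hsplit : ∑ i ∈ Finset.range (n + 1), ((d i : ℝ) * w i - (c i : ℝ) * w i)
      = ∑ i ∈ Finset.range n, ((d i : ℝ) * w i - (c i : ℝ) * w i)
        + ((d n : ℝ) * w n - (c n : ℝ) * w n) := Finset.sum_range_succ _ n
  have hterm : ∀ i ∈ Finset.range n, -((c i : ℝ) * w i)
      ≤ (d i : ℝ) * w i - (c i : ℝ) * w i := by
    intro i _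
    have : (0 : ℝ) ≤ (d i : ℝ) * w i := mul_nonneg (Nat.cast_nonneg _) (hw0 i)
    linarith
  have hge : ∑ i ∈ Finset.range n, -((c i : ℝ) * w i)
      ≤ ∑ i ∈ Finset.range n, ((d i : ℝ) * w i - (c i : ℝ) * w i) :=
    Finset.sum_le_sum hterm
  rw [Finset.sum_neg_distrib] at hge
  have hdn : (c n : ℝ) + 1 ≤ (d n : ℝ) := by exact_mod_cast hn
  have hlast : w n ≤ (d n : ℝ) * w n - (c n : ℝ) * w n := by
    have := mul_le_mul_of_nonneg_right hdn (hw0 n)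
    rw [add_mul, one_mul] at this
    linarith
  have hdiff : 0 < ∑ i ∈ Finset.range M, ((d i : ℝ) * w i - (c i : ℝ) * w i) := by
    rw [hsub, hsplit]
    linarith
  rw [Finset.sum_sub_distrib] at hdiff
  linarith

/-- Trichotomy for finitely supported words. -/
lemma kl_tri (k l : ℕ) {c d : ℕ → ℕ} (hc : c ∈ Admissible k l) (hd : d ∈ Admissible k l) :
    c = d ∨ Prec c d ∨ Prec d c := by
  classical
  by_cases hcd : c = d
  · exact Or.inl hcd
  obtain ⟨_, ⟨Nc, hNc⟩, _, _⟩ := hc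
  obtain ⟨_, ⟨Nd, hNd⟩, _, _⟩ := hd
  obtain ⟨i0, hi0⟩ := Function.ne_iff.mp hcd
  set M := max Nc Nd with hM
  set S := (Finset.range M).filter (fun i => c i ≠ d i) with hS
  have hzero : ∀ i : ℕ, M ≤ i → c i = d i := by
    intro i hi
    rw [hNc i (le_trans (le_max_left _ _) hi), hNd i (le_trans (le_max_right _ _) hi)]
  have hi0M : i0 ∈ S := by
    rw [hS, Finset.mem_filter, Finset.mem_range]
    refine ⟨?_, hi0⟩
    by_contra h
    exact hi0 (hzero i0 (by omega))
  have hSne : S.Nonempty := ⟨i0, hi0M⟩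
  set n := S.max' hSne with hn
  have hnS : n ∈ S := S.max'_mem hSne
  rw [hS, Finset.mem_filter] at hnS
  have hagree : ∀ i : ℕ, n < i → c i = d i := by
    intro i hi
    by_contra hne
    have hiM : i < M := by
      by_contra h
      exact hne (hzero i (by omega))
    have : i ∈ S := by
      rw [hS, Finset.mem_filter, Finset.mem_range]; exact ⟨hiM, hne⟩
    have := S.le_max' i this
    omega
  rcases lt_trichotomy (c n) (d n) with h | h | h
  · exact Or.inr (Or.inl ⟨n, h, hagree⟩)
  · exact absurd h hnS.2
  · exact Or.inr (Or.inr ⟨n, h, fun i hi => (hagree i hi).symm⟩)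

/-- for increasing weights, the order ≺ matches comparison of
weighted sums, and the weighted-sum map is injective on admissible words. -/
theorem prec_iff_weighted_sum_lt
    (k l : ℕ) (hk : 2 ≤ k) (hl : 2 ≤ l)
    (w : ℕ → ℝ) (hw0 : ∀ i : ℕ, 0 ≤ w i) (hmono : StrictMono w)
    (hrec : ∀ i : ℕ, 1 ≤ i → w (i - 1) + w (i + 1) = ((klCoeff k l i : ℝ) + 2) * w i) :
    (∀ c ∈ Admissible k l, ∀ d ∈ Admissible k l,
      (Prec c d ↔ ∑ᶠ i : ℕ, (c i : ℝ) * w i < ∑ᶠ i : ℕ, (d i : ℝ) * w i)) ∧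
    Set.InjOn (fun c : ℕ → ℕ => ∑ᶠ i : ℕ, (c i : ℝ) * w i) (Admissible k l) := by
  constructor
  · intro c hc d hd
    constructor
    · exact kl_forward k l w hw0 hmono hrec hc hd
    · intro hlt
      rcases kl_tri k l hc hd with h | h | h
      · subst h; exact absurd hlt (lt_irrefl _)
      · exact h
      · exact absurd (kl_forward k l w hw0 hmono hrec hd hc h) (by linarith)
  · intro c hc d hd heq
    rcases kl_tri k l hc hd with h | h | h
    · exact h
    · exact absurd (kl_forward k l w hw0 hmono hrec hc hd h) (by simp only at heq; linarith)
    · exact absurd (kl_forward k l w hw0 hmono hrec hd hc h) (by simp only at heq; linarith)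
end

section
/- Let k,l ≥ 2, n ≥ 1, and let (c_i)_{i≥1} be a (k,l)-admissible word whose first n−1 terms vanish. Let (d_i) be the successor of (c_i) in the lexicographic order ≺ restricted to (k,l)-admissible words with first n−1 terms zero. Then: (1) if there exists j ≥ n with c_i = o_i + [i = j] for all n ≤ i ≤ j, then d_n = ⋯ = d_j = 0, d_{j+1} = c_{j+1} + 1, and d_i = c_i for i ≥ j+2; (2) otherwise d_n = c_n + 1 and d_i = c_i for i ≥ n+1. -/
/-- Admissible words whose first `n - 1` terms vanish. -/
def AdmissibleFrom (k l n : ℕ) : Set (ℕ → ℕ) :=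
  {c | c ∈ Admissible k l ∧ ∀ i : ℕ, 1 ≤ i → i < n → c i = 0}

lemma prec_asymm {c d : ℕ → ℕ} (h1 : Prec c d) (h2 : Prec d c) : False := by
  obtain ⟨p, hp, hpa⟩ := h1
  obtain ⟨m, hm, hma⟩ := h2
  rcases lt_trichotomy p m with h | h | h
  · rw [hpa m h] at hm; omega
  · subst h; omega
  · rw [hma p h] at hp; omega

lemma prec_irrefl {c : ℕ → ℕ} (h : Prec c c) : False := by
  obtain ⟨p, hp, _⟩ := h; omega

lemma succ_unique {k l n : ℕ} {c d e : ℕ → ℕ}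
    (hd : d ∈ AdmissibleFrom k l n) (hcd : Prec c d)
    (hsucc : ∀ f ∈ AdmissibleFrom k l n, Prec c f → f = d ∨ Prec d f)
    (he : e ∈ AdmissibleFrom k l n) (hce : Prec c e)
    (hmin : ∀ f ∈ AdmissibleFrom k l n, Prec c f → ¬ Prec f e) :
    d = e := by
  rcases hsucc e he hce with h | h
  · exact h.symm
  · exact absurd h (hmin d hd hcd)

/-- description of the successor of an admissible word with first
`n - 1` terms zero, in the order `≺`. -/
theorem successor_description
    (k l : ℕ) (hk : 2 ≤ k) (hl : 2 ≤ l) (n : ℕ) (hn : 1 ≤ n)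
    (c d : ℕ → ℕ)
    (hc : c ∈ AdmissibleFrom k l n)
    (hd : d ∈ AdmissibleFrom k l n)
    (hcd : Prec c d)
    (hsucc : ∀ e ∈ AdmissibleFrom k l n, Prec c e → e = d ∨ Prec d e) :
    (∀ j : ℕ, n ≤ j →
      (∀ i : ℕ, n ≤ i → i ≤ j → c i = klCoeff k l i + (if i = j then 1 else 0)) →
        ((∀ i : ℕ, n ≤ i → i ≤ j → d i = 0) ∧ d (j + 1) = c (j + 1) + 1 ∧
          ∀ i : ℕ, j + 2 ≤ i → d i = c i)) ∧
    ((¬ ∃ j : ℕ, n ≤ j ∧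
        ∀ i : ℕ, n ≤ i → i ≤ j → c i = klCoeff k l i + (if i = j then 1 else 0)) →
      (d n = c n + 1 ∧ ∀ i : ℕ, n + 1 ≤ i → d i = c i)) := by
  obtain ⟨⟨hc0, ⟨N, hN⟩, hcb, hcf⟩, hcz⟩ := hc
  constructor
  · -- Case 1
    intro j hj H
    have hj1 : 1 ≤ j := le_trans hn hj
    have hcj : c j = klCoeff k l j + 1 := by
      have := H j hj le_rfl
      rwa [if_pos rfl] at this
    have hcjb : c (j + 1) ≤ klCoeff k l (j + 1) := by
      by_contra hcon
      have h1 : c (j + 1) = klCoeff k l (j + 1) + 1 := by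
        have := hcb (j + 1) (by omega); omega
      apply hcf
      refine ⟨j, j + 1, hj1, by omega, ?_⟩
      intro h hh1 hh2
      have hcase2 : h = j ∨ h = j + 1 := by omega
      rcases hcase2 with hh | hh <;> subst hh
      · rw [if_pos (Or.inl rfl)]; exact hcj
      · rw [if_pos (Or.inr rfl)]; exact h1
    set e : ℕ → ℕ := fun i => if i ≤ j then 0 else if i = j + 1 then c (j + 1) + 1 else c i
      with he_def
    have he_le : ∀ i, i ≤ j → e i = 0 := by intro i hi; simp [he_def, hi]
    have he_j1 : e (j + 1) = c (j + 1) + 1 := by simp [he_def]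
    have he_hi : ∀ i, j + 2 ≤ i → e i = c i := by
      intro i hi; simp only [he_def]; rw [if_neg (by omega), if_neg (by omega)]
    have he_mem : e ∈ AdmissibleFrom k l n := by
      refine ⟨⟨he_le 0 (by omega), ⟨max N (j + 2), ?_⟩, ?_, ?_⟩, ?_⟩
      · intro i hi
        rw [he_hi i (le_trans (le_max_right _ _) hi)]
        exact hN i (le_trans (le_max_left _ _) hi)
      · intro i hi
        rcases le_or_gt i j with h | h
        · rw [he_le i h]; omega
        · by_cases h' : i = j + 1
          · rw [h', he_j1]; omega
          · rw [he_hi i (by omega)]; exact hcb i hi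
      · rintro ⟨p, q, hp1, hpq, hpat⟩
        have hep : e p = klCoeff k l p + 1 := by
          have := hpat p le_rfl (le_of_lt hpq)
          rwa [if_pos (Or.inl rfl)] at this
        have hpgt : j < p := by
          by_contra hcon
          rw [he_le p (by omega)] at hep; omega
        by_cases hp2 : p = j + 1
        · have hcj1 : c (j + 1) = klCoeff k l (j + 1) := by
            rw [hp2, he_j1] at hep; omega
          apply hcf
          refine ⟨j, q, hj1, by omega, ?_⟩
          intro h hh1 hh2
          by_cases hhj : h = j
          · subst hhj; rw [if_pos (Or.inl rfl)]; exact hcj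
          · by_cases hhj1 : h = j + 1
            · subst hhj1
              rw [if_neg (by omega : ¬(j + 1 = j ∨ j + 1 = q))]
              simpa using hcj1
            · have hq' := hpat h (by omega) hh2
              rw [he_hi h (by omega)] at hq'
              rw [hq']
              by_cases hhq : h = q
              · rw [if_pos (Or.inr hhq), if_pos (Or.inr hhq)]
              · rw [if_neg (by omega : ¬(h = p ∨ h = q)),
                    if_neg (by omega : ¬(h = j ∨ h = q))]
        · apply hcf
          refine ⟨p, q, hp1, hpq, ?_⟩
          intro h hh1 hh2
          rw [← he_hi h (by omega)]
          exact hpat h hh1 hh2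
      · intro i hi1 hi2
        exact he_le i (by omega)
    have hce : Prec c e := by
      refine ⟨j + 1, ?_, ?_⟩
      · rw [he_j1]; omega
      · intro i hi; rw [he_hi i (by omega)]
    have hmin : ∀ f ∈ AdmissibleFrom k l n, Prec c f → ¬ Prec f e := by
      rintro f ⟨⟨hf0, _, hfb, hff⟩, hfz⟩ hcf' ⟨m, hm, hma⟩
      rcases lt_trichotomy m (j + 1) with hmj | hmj | hmj
      · rw [he_le m (by omega)] at hm; omega
      · subst hmj
        rw [he_j1] at hm
        have hfup : ∀ i, j + 1 < i → f i = c i := by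
          intro i hi; rw [hma i hi, he_hi i (by omega)]
        rcases lt_trichotomy (f (j + 1)) (c (j + 1)) with h' | h' | h'
        · exact prec_asymm hcf' ⟨j + 1, h', fun i hi => hfup i hi⟩
        · obtain ⟨p, hp, hpa⟩ := hcf'
          have hpj : p ≤ j := by
            by_contra hcon
            by_cases hp2 : p = j + 1
            · rw [hp2] at hp; omega
            · rw [hfup p (by omega)] at hp; omega
          have hpn : n ≤ p := by
            by_contra hcon
            have : c p = f p := by
              rcases Nat.eq_zero_or_pos p with rfl | hpp
              · rw [hc0, hf0]
              · rw [hcz p hpp (by omega), hfz p hpp (by omega)]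
            omega
          have hcp : c p = klCoeff k l p + if p = j then 1 else 0 := H p hpn hpj
          by_cases hpj2 : p = j
          · subst hpj2
            rw [if_pos rfl] at hcp
            have := hfb p (by omega)
            omega
          · apply hff
            refine ⟨p, j, by omega, by omega, ?_⟩
            intro h hh1 hh2
            by_cases hhp : h = p
            · subst hhp
              rw [if_neg hpj2] at hcp
              rw [if_pos (Or.inl rfl)]
              have := hfb h (by omega)
              omega
            · have hch : c h = klCoeff k l h + if h = j then 1 else 0 :=
                H h (by omega) hh2
              rw [← hpa h (by omega), hch]
              by_cases hhj : h = j
              · rw [if_pos hhj, if_pos (Or.inr hhj)]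
              · rw [if_neg hhj, if_neg (by omega : ¬(h = p ∨ h = j))]
        · omega
      · rw [he_hi m (by omega)] at hm
        refine prec_asymm hcf' ⟨m, hm, fun i hi => ?_⟩
        rw [hma i hi, he_hi i (by omega)]
    have hde : d = e := succ_unique hd hcd hsucc he_mem hce hmin
    refine ⟨fun i hi1 hi2 => by rw [hde]; exact he_le i hi2,
      by rw [hde]; exact he_j1, fun i hi => by rw [hde]; exact he_hi i hi⟩
  · -- Case 2
    intro hcase
    have hcnb : c n ≤ klCoeff k l n := by
      by_contra hcon
      apply hcase
      refine ⟨n, le_rfl, fun i hi1 hi2 => ?_⟩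
      have hin : i = n := le_antisymm hi2 hi1
      subst hin
      rw [if_pos rfl]
      have := hcb i hn
      omega
    set e : ℕ → ℕ := fun i => if i = n then c n + 1 else c i with he_def
    have he_n : e n = c n + 1 := by simp [he_def]
    have he_ne : ∀ i, i ≠ n → e i = c i := by intro i hi; simp [he_def, hi]
    have he_mem : e ∈ AdmissibleFrom k l n := by
      refine ⟨⟨?_, ⟨max N (n + 1), ?_⟩, ?_, ?_⟩, ?_⟩
      · rw [he_ne 0 (by omega)]; exact hc0
      · intro i hi
        rw [he_ne i (by omega)]
        exact hN i (le_trans (le_max_left _ _) hi)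
      · intro i hi
        by_cases hin : i = n
        · subst hin; rw [he_n]; omega
        · rw [he_ne i hin]; exact hcb i hi
      · rintro ⟨p, q, hp1, hpq, hpat⟩
        have hep : e p = klCoeff k l p + 1 := by
          have := hpat p le_rfl (le_of_lt hpq)
          rwa [if_pos (Or.inl rfl)] at this
        rcases lt_trichotomy p n with hpn | hpn | hpn
        · rw [he_ne p (by omega), hcz p hp1 hpn] at hep; omega
        · subst hpn
          apply hcase
          refine ⟨q, by omega, fun i hi1 hi2 => ?_⟩
          by_cases hin : i = p
          · subst hin
            rw [he_n] at hep
            rw [if_neg (by omega : ¬ i = q)]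
            omega
          · have hq := hpat i (by omega) hi2
            rw [he_ne i hin] at hq
            rw [hq]
            by_cases hiq : i = q
            · rw [if_pos (Or.inr hiq), if_pos hiq]
            · rw [if_neg (by omega : ¬(i = p ∨ i = q)), if_neg hiq]
        · apply hcf
          refine ⟨p, q, hp1, hpq, ?_⟩
          intro h hh1 hh2
          rw [← he_ne h (by omega)]
          exact hpat h hh1 hh2
      · intro i hi1 hi2
        rw [he_ne i (by omega)]
        exact hcz i hi1 hi2
    have hce : Prec c e := by
      refine ⟨n, by rw [he_n]; omega, fun i hi => (he_ne i (by omega)).symm⟩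
    have hmin : ∀ f ∈ AdmissibleFrom k l n, Prec c f → ¬ Prec f e := by
      rintro f ⟨⟨hf0, _, hfb, hff⟩, hfz⟩ hcf' ⟨m, hm, hma⟩
      rcases lt_trichotomy m n with hmn | hmn | hmn
      · have hem : e m = 0 := by
          rcases Nat.eq_zero_or_pos m with rfl | hmp
          · rw [he_ne 0 (by omega)]; exact hc0
          · rw [he_ne m (by omega)]; exact hcz m hmp hmn
        omega
      · subst hmn
        rw [he_n] at hm
        have hfup : ∀ i, m < i → f i = c i := by
          intro i hi; rw [hma i hi, he_ne i (by omega)]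
        rcases lt_trichotomy (f m) (c m) with h' | h' | h'
        · exact prec_asymm hcf' ⟨m, h', fun i hi => hfup i hi⟩
        · have : f = c := by
            funext i
            rcases lt_trichotomy i m with hin | hin | hin
            · rcases Nat.eq_zero_or_pos i with rfl | hip
              · rw [hf0, hc0]
              · rw [hfz i hip hin, hcz i hip hin]
            · subst hin; exact h'
            · exact hfup i hin
          rw [this] at hcf'
          exact prec_irrefl hcf'
        · omega
      · rw [he_ne m (by omega)] at hm
        refine prec_asymm hcf' ⟨m, hm, fun i hi => ?_⟩
        rw [hma i hi, he_ne i (by omega)]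
    have hde : d = e := succ_unique hd hcd hsucc he_mem hce hmin
    refine ⟨by rw [hde]; exact he_n, fun i hi => by rw [hde]; exact he_ne i (by omega)⟩
end

section
/- Let k,l ≥ 2 and n ≥ 1. For positive integers r,s, the inequality r > s₀·s holds, where s₀ = √(l/k)·u with u = (√(kl)+√(kl−4))/2, if and only if the (k,l)-admissible word of r with its first term replaced by 0 is ≻-greater than or equal to the shift 0·[s]^{(l,k)} of the (l,k)-admissible word of s; equivalently, ⌈s₂^{(l,k)}·r⌉ − 1 ≥ s, where the shift prepends a zero, and this holds iff r ≥ 1 + ⌊s₀·s⌋. -/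
/-- The reflexive closure `⪯` of `≺`. -/
def Preceq (c d : ℕ → ℕ) : Prop := c = d ∨ Prec c d

/-- The shift `0·c` of a word (prepend a zero, keeping indexing from 1). -/
def Shift (c : ℕ → ℕ) : ℕ → ℕ := fun i => if i ≤ 1 then 0 else c (i - 1)

/-- The word with its first term replaced by 0. -/
def ZeroFirst (c : ℕ → ℕ) : ℕ → ℕ := fun i => if i = 1 then 0 else c i

lemma core_bound (C : ℕ → ℕ) (φ : ℕ → ℝ) (e : ℕ → ℕ) (N : ℕ)
    (hpos : ∀ i, 0 ≤ φ i)
    (hmono : ∀ i, φ (i+1) ≤ φ i)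
    (hrec : ∀ i, i + 1 ≤ N → φ i + φ (i+2) = ((C (i+1) : ℝ) + 2) * φ (i+1))
    (he : ∀ i, 1 ≤ i → i ≤ N → e i ≤ C i + 1)
    (hforb : ∀ i j, 1 ≤ i → i < j → j ≤ N → e i = C i + 1 → e j = C j + 1 →
        (∀ h, i < h → h < j → e h = C h) → False) :
    ∀ n, n ≤ N → ∑ i ∈ Finset.Ico 1 (n+1), (e i : ℝ) * φ i ≤ φ 0 - φ n + φ (n+1) := by
  have hanti : Antitone φ := antitone_nat_of_succ_le hmono
  suffices H : ∀ n, n ≤ N →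
      (∑ i ∈ Finset.Ico 1 (n+1), (e i : ℝ) * φ i ≤ φ 0 - φ n + φ (n+1)) ∧
      ((∀ i, 1 ≤ i → i ≤ n → e i = C i + 1 → (∀ h, i < h → h ≤ n → e h = C h) → False) →
        ∑ i ∈ Finset.Ico 1 (n+1), (e i : ℝ) * φ i ≤ φ 0 - φ n - φ (max n 1) + φ (n+1)) by
    exact fun n hn => (H n hn).1
  intro n
  induction n with
  | zero =>
    intro _
    constructor
    · simpa using hpos 1
    · intro _
      have : max 0 1 = 1 := by omega
      rw [this]
      simp
  | succ n ih =>
    intro hn1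
    have hnN : n ≤ N := by omega
    obtain ⟨iht, ihu⟩ := ih hnN
    have hsplit : ∑ i ∈ Finset.Ico 1 (n+1+1), (e i : ℝ) * φ i
        = ∑ i ∈ Finset.Ico 1 (n+1), (e i : ℝ) * φ i + (e (n+1):ℝ) * φ (n+1) :=
      Finset.sum_Ico_succ_top (by omega) _
    have hrn := hrec n (by omega)
    have hmax : φ (n+1) ≤ φ (max n 1) := hanti (by omega)
    have hphin : 0 ≤ φ (n+1) := hpos _
    have hmm : max (n+1) 1 = n + 1 := by omega
    have hcases : e (n+1) = C (n+1) + 1 ∨ e (n+1) ≤ C (n+1) := by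
      have := he (n+1) (by omega) (by omega); omega
    constructor
    · rcases hcases with hc | hc
      · have hnr : ∀ i, 1 ≤ i → i ≤ n → e i = C i + 1 →
            (∀ h, i < h → h ≤ n → e h = C h) → False := by
          intro i h1 h2 h3 h4
          exact hforb i (n+1) h1 (by omega) (by omega) h3 hc
            (fun h hh1 hh2 => h4 h hh1 (by omega))
        have hu := ihu hnr
        rw [hsplit, hc]
        push_cast
        linarith [hmax]
      · have hcle : (e (n+1):ℝ) ≤ (C (n+1):ℝ) := by exact_mod_cast hc
        have hmul : (e (n+1):ℝ) * φ (n+1) ≤ (C (n+1):ℝ) * φ (n+1) :=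
          mul_le_mul_of_nonneg_right hcle hphin
        rw [hsplit]
        linarith [iht]
    · intro hU
      rw [hmm]
      have hcases3 : e (n+1) = C (n+1) + 1 ∨ e (n+1) = C (n+1) ∨ e (n+1) + 1 ≤ C (n+1) := by
        have := he (n+1) (by omega) (by omega); omega
      rcases hcases3 with hc | hc | hc
      · exact (hU (n+1) (by omega) le_rfl hc (fun h hh1 hh2 => by omega)).elim
      · have hnr' : ∀ i, 1 ≤ i → i ≤ n → e i = C i + 1 →
            (∀ h, i < h → h ≤ n → e h = C h) → False := by
          intro i h1 h2 h3 h4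
          refine hU i h1 (by omega) h3 (fun h hh1 hh2 => ?_)
          rcases Nat.lt_or_ge h (n+1) with hh | hh
          · exact h4 h hh1 (by omega)
          · have : h = n + 1 := by omega
            rw [this, hc]
        have hu := ihu hnr'
        rw [hsplit, hc]
        linarith [hmax]
      · have hcle : (e (n+1):ℝ) + 1 ≤ (C (n+1):ℝ) := by exact_mod_cast hc
        have hmul : (e (n+1):ℝ) * φ (n+1) ≤ ((C (n+1):ℝ) - 1) * φ (n+1) :=
          mul_le_mul_of_nonneg_right (by linarith) hphin
        rw [hsplit]
        linarith [iht]

lemma klCoeff_succ (k l i : ℕ) : klCoeff k l (i+1) = klCoeff l k i := by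
  unfold klCoeff
  rcases Nat.mod_two_eq_zero_or_one i with h | h
  · rw [if_pos (show (i+1) % 2 = 1 by omega), if_neg (show ¬ i % 2 = 1 by omega)]
  · rw [if_neg (show ¬ (i+1) % 2 = 1 by omega), if_pos (show i % 2 = 1 by omega)]

lemma klCoeff_cast_int (k l : ℕ) (hk : 2 ≤ k) (hl : 2 ≤ l) (i : ℕ) :
    ((klCoeff k l i : ℤ)) + 2 = if i % 2 = 1 then (l:ℤ) else (k:ℤ) := by
  unfold klCoeff
  split_ifs <;> omega

lemma klCoeff_cast_real (k l : ℕ) (hk : 2 ≤ k) (hl : 2 ≤ l) (i : ℕ) :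
    ((klCoeff k l i : ℝ)) + 2 = if i % 2 = 1 then (l:ℝ) else (k:ℝ) := by
  unfold klCoeff
  split_ifs
  · rw [Nat.cast_sub hl]; push_cast; ring
  · rw [Nat.cast_sub hk]; push_cast; ring

lemma forbidden_translate (k l : ℕ) (x : ℕ → ℕ) (hnf : ¬ Forbidden k l x) :
    ∀ i j, 1 ≤ i → i < j → x i = klCoeff k l i + 1 → x j = klCoeff k l j + 1 →
      (∀ h, i < h → h < j → x h = klCoeff k l h) → False := by
  intro i j h1 hij hxi hxj hrun
  refine hnf ⟨i, j, h1, hij, fun h hh1 hh2 => ?_⟩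
  rcases eq_or_lt_of_le hh1 with rfl | hlt
  · simp [hxi]
  · rcases eq_or_lt_of_le hh2 with rfl | hlt2
    · have hne : h ≠ i := by omega
      simp [hne, hxj]
    · have hne1 : h ≠ i := by omega
      have hne2 : h ≠ j := by omega
      simp [hne1, hne2, hrun h hlt hlt2]

lemma seq_facts (A : ℕ → ℤ) (h0 : A 0 = 0) (h1 : A 1 = 1) (K : ℕ → ℤ)
    (hK : ∀ m, 2 ≤ K m) (hrec : ∀ m, A (m+2) = K m * A (m+1) - A m) :
    ∀ m, 0 ≤ A m ∧ A m < A (m+1) := by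
  intro m
  induction m with
  | zero => rw [h0, h1]; omega
  | succ n ih =>
    obtain ⟨ha, hb⟩ := ih
    refine ⟨by omega, ?_⟩
    rw [hrec n]
    nlinarith [hK n, mul_nonneg (by linarith [hK n] : (0:ℤ) ≤ K n - 2) (by omega : (0:ℤ) ≤ A (n+1))]

lemma greedy_bound (C : ℕ → ℕ) (A : ℕ → ℤ) (h0 : A 0 = 0) (h1 : A 1 = 1)
    (hrec : ∀ m, A (m+2) = ((C (m+1) : ℤ) + 2) * A (m+1) - A m)
    (hsf : ∀ m, 0 ≤ A m ∧ A m < A (m+1))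
    (e : ℕ → ℕ) (he : ∀ i, 1 ≤ i → e i ≤ C i + 1)
    (hforb : ∀ i j, 1 ≤ i → i < j → e i = C i + 1 → e j = C j + 1 →
        (∀ h, i < h → h < j → e h = C h) → False) :
    ∀ n, 1 ≤ n → ∑ i ∈ Finset.Ico 1 n, (e i : ℤ) * A i ≤ A n - 1 := by
  intro n hn
  have hmonoA : Monotone A := monotone_nat_of_le_succ (fun m => (hsf m).2.le)
  set φ : ℕ → ℝ := fun j => (A (n - j) : ℝ) with hφ
  set C' : ℕ → ℕ := fun j => C (n - j) with hC'
  set e' : ℕ → ℕ := fun i => if i ≤ n - 1 then e (n - i) else 0 with he'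
  have key := core_bound C' φ e' (n-1)
    (fun i => by simp only [hφ]; exact_mod_cast (hsf (n - i)).1)
    (fun i => by
      simp only [hφ]
      exact_mod_cast hmonoA (show n - (i+1) ≤ n - i by omega))
    (fun i hi => by
      simp only [hφ, hC']
      have hm2 : n - i = (n - i - 2) + 2 := by omega
      have hm1 : n - (i+1) = (n - i - 2) + 1 := by omega
      have hm0 : n - (i+2) = n - i - 2 := by omega
      rw [hm2, hm1, hm0]
      have := hrec (n - i - 2)
      push_cast [this]
      ring)
    (fun i h1 h2 => by
      simp only [he', hC', if_pos h2]
      exact he (n - i) (by omega))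
    (fun i j h1 hij hj hei hej hrun => by
      simp only [he', hC', if_pos (show i ≤ n - 1 by omega)] at hei
      simp only [he', hC', if_pos (show j ≤ n - 1 by omega)] at hej
      refine hforb (n - j) (n - i) (by omega) (by omega) hej hei (fun h hh1 hh2 => ?_)
      have hg : i < n - h := by omega
      have hg2 : n - h < j := by omega
      have := hrun (n - h) hg hg2
      simp only [he', hC', if_pos (show n - h ≤ n - 1 by omega)] at this
      rw [show n - (n - h) = h by omega] at this
      exact this)
    (n-1) le_rfl
  rw [show n - 1 + 1 = n by omega] at key
  have hreidx : ∑ i ∈ Finset.Ico 1 n, (e' i : ℝ) * φ i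
      = ∑ i ∈ Finset.Ico 1 n, (e i : ℝ) * (A i : ℝ) := by
    refine Finset.sum_nbij' (fun i => n - i) (fun i => n - i) ?_ ?_ ?_ ?_ ?_
    · intro x hx; simp only [Finset.mem_Ico] at *; omega
    · intro x hx; simp only [Finset.mem_Ico] at *; omega
    · intro x hx; simp only [Finset.mem_Ico] at hx; show n - (n - x) = x; omega
    · intro x hx; simp only [Finset.mem_Ico] at hx; show n - (n - x) = x; omega
    · intro x hx
      simp only [Finset.mem_Ico] at hx
      simp only [he', hφ, if_pos (show x ≤ n - 1 by omega)]
  rw [hreidx] at key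
  have hφ0 : φ 0 = (A n : ℝ) := by simp [hφ]
  have hφn1 : φ (n-1) = 1 := by
    simp only [hφ]
    rw [show n - (n-1) = 1 by omega, h1]
    norm_num
  have hφnn : φ n = 0 := by
    simp only [hφ]
    rw [show n - n = 0 by omega, h0]
    norm_num
  rw [hφ0, hφn1, hφnn, add_zero] at key
  exact_mod_cast key

lemma sum_lt_sum_of_prec (A : ℕ → ℤ) (h0 : A 0 = 0) (hpos : ∀ m, 0 ≤ A m)
    (x y : ℕ → ℕ) (M : ℕ)
    (hxM : ∀ i, M ≤ i → x i = 0) (hyM : ∀ i, M ≤ i → y i = 0)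
    (hB : ∀ n, 1 ≤ n → ∑ i ∈ Finset.Ico 1 n, (x i : ℤ) * A i ≤ A n - 1)
    (n : ℕ) (hn : 1 ≤ n) (hlt : x n < y n) (hag : ∀ i, n < i → x i = y i) :
    ∑ i ∈ Finset.range M, (x i : ℤ) * A i < ∑ i ∈ Finset.range M, (y i : ℤ) * A i := by
  have hnM : n < M := by
    by_contra h
    push_neg at h
    rw [hxM n h, hyM n h] at hlt
    exact lt_irrefl _ hlt
  have split : ∀ z : ℕ → ℕ, ∑ i ∈ Finset.range M, (z i:ℤ) * A i
      = ∑ i ∈ Finset.range (n+1), (z i:ℤ) * A i + ∑ i ∈ Finset.Ico (n+1) M, (z i:ℤ) * A i :=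
    fun z => (Finset.sum_range_add_sum_Ico _ (by omega)).symm
  rw [split x, split y]
  have tail : ∑ i ∈ Finset.Ico (n+1) M, (x i:ℤ) * A i
      = ∑ i ∈ Finset.Ico (n+1) M, (y i:ℤ) * A i :=
    Finset.sum_congr rfl (fun i hi => by
      rw [hag i (by exact_mod_cast (Finset.mem_Ico.mp hi).1)])
  rw [tail]
  refine add_lt_add_of_lt_of_le ?_ le_rfl
  rw [Finset.sum_range_succ, Finset.sum_range_succ]
  have h1 : ∑ i ∈ Finset.range n, (x i:ℤ) * A i ≤ A n - 1 := by
    have heq : ∑ i ∈ Finset.range n, (x i:ℤ) * A i = ∑ i ∈ Finset.Ico 1 n, (x i:ℤ) * A i := by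
      rw [Finset.range_eq_Ico, Finset.sum_eq_sum_Ico_succ_bot (by omega : 0 < n)]
      rw [h0]
      ring_nf
    rw [heq]
    exact hB n hn
  have h2 : 0 ≤ ∑ i ∈ Finset.range n, (y i:ℤ) * A i :=
    Finset.sum_nonneg (fun i _ => mul_nonneg (by positivity) (hpos i))
  have h3 : (x n:ℤ) + 1 ≤ (y n:ℤ) := by exact_mod_cast hlt
  have h4 : 0 ≤ A n := hpos n
  nlinarith [mul_le_mul_of_nonneg_right h3 h4]

lemma preceq_iff_sum_le (A : ℕ → ℤ) (h0 : A 0 = 0) (hpos : ∀ m, 0 ≤ A m)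
    (x y : ℕ → ℕ) (M : ℕ)
    (hxM : ∀ i, M ≤ i → x i = 0) (hyM : ∀ i, M ≤ i → y i = 0)
    (hBx : ∀ n, 1 ≤ n → ∑ i ∈ Finset.Ico 1 n, (x i : ℤ) * A i ≤ A n - 1)
    (hBy : ∀ n, 1 ≤ n → ∑ i ∈ Finset.Ico 1 n, (y i : ℤ) * A i ≤ A n - 1)
    (h00 : x 0 = y 0) :
    (x = y ∨ ∃ n : ℕ, x n < y n ∧ ∀ i : ℕ, n < i → x i = y i) ↔
      ∑ i ∈ Finset.range M, (x i : ℤ) * A i ≤ ∑ i ∈ Finset.range M, (y i : ℤ) * A i := by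
  constructor
  · rintro (rfl | ⟨n, hlt, hag⟩)
    · exact le_refl _
    · rcases Nat.eq_zero_or_pos n with rfl | hn
      · rw [h00] at hlt; exact absurd hlt (lt_irrefl _)
      · exact (sum_lt_sum_of_prec A h0 hpos x y M hxM hyM hBx n hn hlt hag).le
  · intro hle
    by_contra hnp
    obtain ⟨hne, hnprec⟩ := not_or.mp hnp
    have hDne : ∃ i, i ∈ (Finset.range M).filter (fun i => x i ≠ y i) := by
      obtain ⟨i, hi⟩ := Function.ne_iff.mp hne
      refine ⟨i, Finset.mem_filter.mpr ⟨Finset.mem_range.mpr ?_, hi⟩⟩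
      by_contra h
      push_neg at h
      rw [hxM i h, hyM i h] at hi
      exact hi rfl
    set D := (Finset.range M).filter (fun i => x i ≠ y i) with hD
    have hDne' : D.Nonempty := hDne
    set n := D.max' hDne' with hn
    have hnD : n ∈ D := D.max'_mem hDne'
    have hxy : x n ≠ y n := (Finset.mem_filter.mp hnD).2
    have hag : ∀ i, n < i → x i = y i := by
      intro i hi
      by_contra hne2
      have hiM : i < M := by
        by_contra h
        push_neg at h
        rw [hxM i h, hyM i h] at hne2
        exact hne2 rfl
      have hiD : i ∈ D := Finset.mem_filter.mpr ⟨Finset.mem_range.mpr hiM, hne2⟩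
      exact absurd (D.le_max' i hiD) (not_le.mpr hi)
    have hn1 : 1 ≤ n := by
      rcases Nat.eq_zero_or_pos n with h | h
      · rw [h] at hxy; exact absurd h00 hxy
      · exact h
    rcases lt_or_gt_of_ne hxy with h | h
    · exact hnprec ⟨n, h, hag⟩
    · have := sum_lt_sum_of_prec A h0 hpos y x M hyM hxM hBy n hn1 h
        (fun i hi => (hag i hi).symm)
      omega

set_option maxHeartbeats 1000000 in
/-- the ratio inequality `r > s₀ s` via admissible words. -/
theorem ratio_via_admissible_words
    (k l : ℕ) (hk : 2 ≤ k) (hl : 2 ≤ l)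
    (a a' : ℕ → ℤ)
    (ha0 : a 0 = 0) (ha1 : a 1 = 1)
    (haeven : ∀ n : ℕ, a (2 * n + 2) = (l : ℤ) * a (2 * n + 1) - a (2 * n))
    (haodd : ∀ n : ℕ, a (2 * n + 3) = (k : ℤ) * a (2 * n + 2) - a (2 * n + 1))
    (ha'0 : a' 0 = 0) (ha'1 : a' 1 = 1)
    (ha'even : ∀ n : ℕ, a' (2 * n + 2) = (k : ℤ) * a' (2 * n + 1) - a' (2 * n))
    (ha'odd : ∀ n : ℕ, a' (2 * n + 3) = (l : ℤ) * a' (2 * n + 2) - a' (2 * n + 1))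
    (u s0 : ℝ)
    (hu : u = (Real.sqrt ((k : ℝ) * l) + Real.sqrt ((k : ℝ) * l - 4)) / 2)
    (hs0 : s0 = Real.sqrt ((l : ℝ) / k) * u)
    (r s : ℕ) (hr : 1 ≤ r) (hs : 1 ≤ s)
    (c d : ℕ → ℕ)
    (hc : c ∈ Admissible k l) (hd : d ∈ Admissible l k)
    (hcr : Gamma a c = (r : ℤ)) (hds : Gamma a' d = (s : ℤ)) :
    ((s0 * s < (r : ℝ)) ↔ Preceq (Shift d) (ZeroFirst c)) ∧
    ((s0 * s < (r : ℝ)) ↔ (s : ℤ) ≤ ⌈s0⁻¹ * r⌉ - 1) ∧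
    ((s0 * s < (r : ℝ)) ↔ 1 + ⌊s0 * s⌋ ≤ (r : ℤ)) := by
  classical
  obtain ⟨hc0, ⟨Nc, hNc⟩, hcb, hcforb⟩ := hc
  obtain ⟨hd0, ⟨Nd, hNd⟩, hdb, hdforb⟩ := hd
  -- ## real constants
  have hk2R : (2:ℝ) ≤ (k:ℝ) := by exact_mod_cast hk
  have hl2R : (2:ℝ) ≤ (l:ℝ) := by exact_mod_cast hl
  have hk0 : (0:ℝ) < k := by linarith
  have hl0 : (0:ℝ) < l := by linarith
  have hkl4 : (4:ℝ) ≤ (k:ℝ) * l := by nlinarith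
  have hA2 : (2:ℝ) ≤ Real.sqrt ((k:ℝ)*l) := by
    rw [show (2:ℝ) = Real.sqrt 4 by
      rw [show (4:ℝ) = 2^2 by norm_num, Real.sqrt_sq (by norm_num : (0:ℝ) ≤ 2)]]
    exact Real.sqrt_le_sqrt hkl4
  have hB0 : 0 ≤ Real.sqrt ((k:ℝ)*l - 4) := Real.sqrt_nonneg _
  have hupos : 0 < u := by rw [hu]; linarith
  have huge : Real.sqrt ((k:ℝ)*l) ≤ 2 * u := by rw [hu]; linarith
  have hune : u ≠ 0 := ne_of_gt hupos
  have hu2 : u^2 + 1 = Real.sqrt ((k:ℝ)*l) * u := by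
    have h1 : Real.sqrt ((k:ℝ)*l) ^ 2 = (k:ℝ)*l := Real.sq_sqrt (by positivity)
    have h2 : Real.sqrt ((k:ℝ)*l - 4) ^ 2 = (k:ℝ)*l - 4 := Real.sq_sqrt (by linarith)
    rw [hu]
    nlinarith [h1, h2]
  set sq : ℝ := Real.sqrt ((l:ℝ)/k) with hsqdef
  have hsqpos : 0 < sq := Real.sqrt_pos.mpr (by positivity)
  have hsqA : sq * Real.sqrt ((k:ℝ)*l) = l := by
    rw [hsqdef, ← Real.sqrt_mul (by positivity : (0:ℝ) ≤ (l:ℝ)/k)]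
    rw [show ((l:ℝ)/k) * ((k:ℝ)*l) = (l:ℝ)^2 by field_simp]
    exact Real.sqrt_sq (by positivity)
  have hksq : (k:ℝ) * sq = Real.sqrt ((k:ℝ)*l) := by
    rw [hsqdef, show (k:ℝ)*(l:ℝ) = (k:ℝ)^2 * ((l:ℝ)/k) by field_simp,
        Real.sqrt_mul (by positivity : (0:ℝ) ≤ (k:ℝ)^2), Real.sqrt_sq hk0.le]
  have hsqu : sq ≤ u := by nlinarith [hksq, huge, hsqpos]
  have hs0eq : s0 = sq * u := by rw [hs0, hsqdef]
  have hs0ge1 : 1 ≤ sq * u := by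
    nlinarith [mul_nonneg hsqpos.le (by linarith : (0:ℝ) ≤ 2*u - Real.sqrt ((k:ℝ)*l)), hsqA]
  have hs0pos : 0 < s0 := by rw [hs0eq]; exact mul_pos hsqpos hupos
  -- ## integer sequence facts
  have hk2Z : (2:ℤ) ≤ (k:ℤ) := by exact_mod_cast hk
  have hl2Z : (2:ℤ) ≤ (l:ℤ) := by exact_mod_cast hl
  have hastep : ∀ m, a (m+2) = (if m % 2 = 0 then (l:ℤ) else (k:ℤ)) * a (m+1) - a m := by
    intro m
    rcases Nat.even_or_odd m with ⟨p, hp⟩ | ⟨p, hp⟩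
    · subst hp
      rw [if_pos (show (p+p) % 2 = 0 by omega)]
      have := haeven p
      rw [two_mul] at this
      exact this
    · subst hp
      rw [if_neg (show ¬ (2*p+1) % 2 = 0 by omega), show 2*p+1+2 = 2*p+3 by omega]
      exact haodd p
  have ha'step : ∀ m, a' (m+2) = (if m % 2 = 0 then (k:ℤ) else (l:ℤ)) * a' (m+1) - a' m := by
    intro m
    rcases Nat.even_or_odd m with ⟨p, hp⟩ | ⟨p, hp⟩
    · subst hp
      rw [if_pos (show (p+p) % 2 = 0 by omega)]
      have := ha'even p
      rw [two_mul] at this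
      exact this
    · subst hp
      rw [if_neg (show ¬ (2*p+1) % 2 = 0 by omega), show 2*p+1+2 = 2*p+3 by omega]
      exact ha'odd p
  have hsfa : ∀ m, 0 ≤ a m ∧ a m < a (m+1) :=
    seq_facts a ha0 ha1 _ (fun m => by split_ifs <;> [exact hl2Z; exact hk2Z]) hastep
  have hsfa' : ∀ m, 0 ≤ a' m ∧ a' m < a' (m+1) :=
    seq_facts a' ha'0 ha'1 _ (fun m => by split_ifs <;> [exact hk2Z; exact hl2Z]) ha'step
  have hposa' : ∀ m, 0 ≤ a' m := fun m => (hsfa' m).1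
  have hrecA' : ∀ m, a' (m+2) = ((klCoeff l k (m+1) : ℤ) + 2) * a' (m+1) - a' m := by
    intro m
    rw [klCoeff_cast_int l k hl hk (m+1), ha'step m]
    rcases Nat.mod_two_eq_zero_or_one m with h | h
    · rw [if_pos h, if_pos (show (m+1) % 2 = 1 by omega)]
    · rw [if_neg (show ¬ m % 2 = 0 by omega), if_neg (show ¬ (m+1) % 2 = 1 by omega)]
  have ha2 : a 2 = (l:ℤ) := by
    have := haeven 0
    norm_num [ha0, ha1] at this
    exact this
  -- ## the weight function φ and its closed form
  set φ : ℕ → ℝ := fun i => if i = 0 then s0 else (a i : ℝ) - s0 * (a' (i-1) : ℝ) with hφdef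
  have hφ0 : φ 0 = s0 := by simp [hφdef]
  have hφs : ∀ i, φ (i+1) = (a (i+1) : ℝ) - s0 * (a' i : ℝ) := by
    intro i; simp [hφdef]
  have hφ1 : φ 1 = 1 := by rw [hφs 0, ha1, ha'0]; norm_num
  have hφrec : ∀ i, φ i + φ (i+2) = ((klCoeff k l (i+1) : ℝ) + 2) * φ (i+1) := by
    intro i
    rw [klCoeff_cast_real k l hk hl (i+1)]
    rcases Nat.eq_zero_or_pos i with rfl | hi
    · rw [if_pos (by norm_num), hφ0, hφ1, hφs 1, ha2, ha'1]
      push_cast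
      ring
    · obtain ⟨m, rfl⟩ : ∃ m, i = m + 1 := ⟨i - 1, by omega⟩
      have g1 := hφs m
      have g2 := hφs (m+1)
      have g3 := hφs (m+2)
      rw [show m+1+1 = m+2 by omega] at g2
      rw [show m+2+1 = m+3 by omega] at g3
      rw [show m+1+2 = m+3 by omega, show m+1+1 = m+2 by omega, g1, g2, g3]
      have e1 := hastep (m+1)
      rw [show m+1+2 = m+3 by omega, show m+1+1 = m+2 by omega] at e1
      have e2 := ha'step m
      rcases Nat.mod_two_eq_zero_or_one m with h | h
      · rw [if_neg (show ¬ (m+1) % 2 = 0 by omega)] at e1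
        rw [if_pos h] at e2
        rw [if_neg (show ¬ (m+1+1) % 2 = 1 by omega)]
        have e1R : (a (m+3) : ℝ) = (k:ℝ) * (a (m+2):ℝ) - (a (m+1):ℝ) := by
          exact_mod_cast congrArg (fun z : ℤ => (z:ℝ)) e1
        have e2R : (a' (m+2) : ℝ) = (k:ℝ) * (a' (m+1):ℝ) - (a' m:ℝ) := by
          exact_mod_cast congrArg (fun z : ℤ => (z:ℝ)) e2
        rw [e1R, e2R]
        ring
      · rw [if_pos (show (m+1) % 2 = 0 by omega)] at e1
        rw [if_neg (show ¬ m % 2 = 0 by omega)] at e2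
        rw [if_pos (show (m+1+1) % 2 = 1 by omega)]
        have e1R : (a (m+3) : ℝ) = (l:ℝ) * (a (m+2):ℝ) - (a (m+1):ℝ) := by
          exact_mod_cast congrArg (fun z : ℤ => (z:ℝ)) e1
        have e2R : (a' (m+2) : ℝ) = (l:ℝ) * (a' (m+1):ℝ) - (a' m:ℝ) := by
          exact_mod_cast congrArg (fun z : ℤ => (z:ℝ)) e2
        rw [e1R, e2R]
        ring
  -- ## closed form ψ
  set ψ : ℕ → ℝ := fun i => (if i % 2 = 0 then sq else 1) * u ^ ((1:ℤ) - (i:ℤ)) with hψdef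
  have hψ0 : ψ 0 = sq * u := by
    simp only [hψdef]
    norm_num
  have hψ1 : ψ 1 = 1 := by
    simp only [hψdef]
    norm_num
  have base_even : (l:ℝ) * u - sq * u^2 = sq := by
    linear_combination (-sq) * hu2 - u * hsqA
  have base_odd : (k:ℝ) * sq * u - u^2 = 1 := by
    linear_combination u * hksq - hu2
  have hstep2 : ∀ i, φ (i+2) = ((klCoeff k l (i+1):ℝ) + 2) * φ (i+1) - φ i :=
    fun i => by linarith [hφrec i]
  have hφψ : ∀ i, φ i = ψ i := by
    have pair : ∀ i, φ i = ψ i ∧ φ (i+1) = ψ (i+1) := by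
      intro i
      induction i with
      | zero => exact ⟨by rw [hφ0, hψ0, hs0eq], by rw [hφ1, hψ1]⟩
      | succ n ih =>
        obtain ⟨ih1, ih2⟩ := ih
        refine ⟨ih2, ?_⟩
        rw [show n+1+1 = n+2 by omega, hstep2 n, ih1, ih2,
            klCoeff_cast_real k l hk hl (n+1)]
        simp only [hψdef]
        rw [show (1:ℤ) - ((n+2:ℕ):ℤ) = -1 - (n:ℤ) by push_cast; ring,
            show (1:ℤ) - ((n+1:ℕ):ℤ) = (-1 - (n:ℤ)) + 1 by push_cast; ring,
            show (1:ℤ) - ((n:ℕ):ℤ) = (-1 - (n:ℤ)) + 1 + 1 by push_cast; ring,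
            zpow_add_one₀ hune, zpow_add_one₀ hune, zpow_add_one₀ hune]
        rcases Nat.mod_two_eq_zero_or_one n with h | h
        · rw [if_pos (show (n+2) % 2 = 0 by omega), if_neg (show ¬ (n+1) % 2 = 0 by omega),
              if_pos h, if_pos (show (n+1) % 2 = 1 by omega)]
          linear_combination (u ^ (-1 - (n:ℤ))) * base_even
        · rw [if_neg (show ¬ (n+2) % 2 = 0 by omega), if_pos (show (n+1) % 2 = 0 by omega),
              if_neg (show ¬ n % 2 = 0 by omega), if_neg (show ¬ (n+1) % 2 = 1 by omega)]
          linear_combination (u ^ (-1 - (n:ℤ))) * base_odd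
    exact fun i => (pair i).1
  have hψpos : ∀ i, 0 < ψ i := by
    intro i
    simp only [hψdef]
    split_ifs
    · exact mul_pos hsqpos (zpow_pos hupos _)
    · rw [one_mul]; exact zpow_pos hupos _
  have hψmono : ∀ i, ψ (i+1) ≤ ψ i := by
    intro i
    simp only [hψdef]
    have hz : (0:ℝ) < u ^ (-(i:ℤ)) := zpow_pos hupos _
    rw [show (1:ℤ) - ((i+1:ℕ):ℤ) = -(i:ℤ) by push_cast; ring,
        show (1:ℤ) - ((i:ℕ):ℤ) = (-(i:ℤ)) + 1 by push_cast; ring,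
        zpow_add_one₀ hune]
    rcases Nat.mod_two_eq_zero_or_one i with h | h
    · rw [if_pos h, if_neg (show ¬ (i+1) % 2 = 0 by omega), one_mul]
      nlinarith [mul_nonneg (by linarith : (0:ℝ) ≤ sq * u - 1) hz.le]
    · rw [if_neg (show ¬ i % 2 = 0 by omega), if_pos (show (i+1) % 2 = 0 by omega), one_mul]
      nlinarith [mul_nonneg (by linarith : (0:ℝ) ≤ u - sq) hz.le]
  have hφpos : ∀ i, 0 < φ i := fun i => by rw [hφψ i]; exact hψpos i
  have hφmono : ∀ i, φ (i+1) ≤ φ i := fun i => by rw [hφψ i, hφψ (i+1)]; exact hψmono i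
  -- ## support bound and sums
  set M : ℕ := Nc + Nd + 2 with hMdef
  have hcM : ∀ i, M ≤ i → c i = 0 := fun i hi => hNc i (by omega)
  have hdM : ∀ i, M ≤ i → d i = 0 := fun i hi => hNd i (by omega)
  set c'' : ℕ → ℕ := fun i => if i = 0 then 0 else c (i+1) with hc''def
  have hc''M : ∀ i, M ≤ i → c'' i = 0 := by
    intro i hi
    simp only [hc''def]
    split_ifs with h
    · rfl
    · exact hNc (i+1) (by omega)
  have gamma_eq : ∀ (A : ℕ → ℤ) (x : ℕ → ℕ), (∀ i, M ≤ i → x i = 0) →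
      Gamma A x = ∑ i ∈ Finset.range M, (x i : ℤ) * A i := by
    intro A x hx
    apply finsum_eq_finset_sum_of_support_subset
    intro i hi
    simp only [Function.mem_support] at hi
    simp only [Finset.coe_range, Set.mem_Iio]
    by_contra h
    push_neg at h
    rw [hx i h] at hi
    simp at hi
  have hrS : ∑ i ∈ Finset.range M, (c i : ℤ) * a i = (r:ℤ) := by
    rw [← gamma_eq a c hcM]; exact hcr
  have hsS : ∑ i ∈ Finset.range M, (d i : ℤ) * a' i = (s:ℤ) := by
    rw [← gamma_eq a' d hdM]; exact hds
  set t : ℤ := ∑ i ∈ Finset.range M, (c'' i : ℤ) * a' i with htdef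
  -- ## order lemma applications
  have hforb_c := forbidden_translate k l c hcforb
  have hforb_d := forbidden_translate l k d hdforb
  have hc''b : ∀ i, 1 ≤ i → c'' i ≤ klCoeff l k i + 1 := by
    intro i hi
    simp only [hc''def, if_neg (show ¬ i = 0 by omega)]
    rw [← klCoeff_succ k l i]
    exact hcb (i+1) (by omega)
  have hforb_c'' : ∀ i j, 1 ≤ i → i < j → c'' i = klCoeff l k i + 1 →
      c'' j = klCoeff l k j + 1 →
      (∀ h, i < h → h < j → c'' h = klCoeff l k h) → False := by
    intro i j h1 hij hei hej hrun
    simp only [hc''def, if_neg (show ¬ i = 0 by omega)] at hei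
    simp only [hc''def, if_neg (show ¬ j = 0 by omega)] at hej
    rw [← klCoeff_succ k l i] at hei
    rw [← klCoeff_succ k l j] at hej
    refine hforb_c (i+1) (j+1) (by omega) (by omega) hei hej (fun h hh1 hh2 => ?_)
    have hr2 := hrun (h-1) (by omega) (by omega)
    simp only [hc''def, if_neg (show ¬ h - 1 = 0 by omega)] at hr2
    rw [show h - 1 + 1 = h by omega] at hr2
    rw [hr2, ← klCoeff_succ k l (h-1), show h - 1 + 1 = h by omega]
  have hBd := greedy_bound (klCoeff l k) a' ha'0 ha'1 hrecA' hsfa' d hdb hforb_d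
  have hBc'' := greedy_bound (klCoeff l k) a' ha'0 ha'1 hrecA' hsfa' c'' hc''b hforb_c''
  have hP2 : (d = c'' ∨ ∃ n, d n < c'' n ∧ ∀ i, n < i → d i = c'' i) ↔ (s:ℤ) ≤ t := by
    have h00 : d 0 = c'' 0 := by rw [hd0]; simp [hc''def]
    have hiff := preceq_iff_sum_le a' ha'0 hposa' d c'' M hdM hc''M hBd hBc'' h00
    rw [hsS] at hiff
    rw [← htdef] at hiff
    exact hiff
  -- ## Preceq correspondence under shift
  have hS0 : Shift d 0 = 0 := by simp [Shift]
  have hS1 : Shift d 1 = 0 := by simp [Shift]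
  have hSi : ∀ i, 2 ≤ i → Shift d i = d (i-1) := by
    intro i hi; simp only [Shift]; rw [if_neg (by omega)]
  have hZ0 : ZeroFirst c 0 = 0 := by
    simp only [ZeroFirst]
    rw [if_neg (by omega)]
    exact hc0
  have hZ1 : ZeroFirst c 1 = 0 := by simp [ZeroFirst]
  have hZi : ∀ i, 2 ≤ i → ZeroFirst c i = c i := by
    intro i hi; simp only [ZeroFirst]; rw [if_neg (by omega)]
  have hP1 : Preceq (Shift d) (ZeroFirst c) ↔
      (d = c'' ∨ ∃ n, d n < c'' n ∧ ∀ i, n < i → d i = c'' i) := by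
    constructor
    · rintro (heq | ⟨n, hlt, hag⟩)
      · refine Or.inl (funext fun i => ?_)
        rcases Nat.eq_zero_or_pos i with rfl | hi
        · rw [hd0]; simp [hc''def]
        · have h2 := congrFun heq (i+1)
          rw [hSi (i+1) (by omega), hZi (i+1) (by omega)] at h2
          simp only [Nat.add_sub_cancel] at h2
          simp only [hc''def, if_neg (show ¬ i = 0 by omega)]
          exact h2
      · have hn2 : 2 ≤ n := by
          by_contra hcon
          interval_cases n
          · rw [hS0, hZ0] at hlt; exact absurd hlt (lt_irrefl _)
          · rw [hS1, hZ1] at hlt; exact absurd hlt (lt_irrefl _)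
        refine Or.inr ⟨n - 1, ?_, ?_⟩
        · rw [hSi n hn2, hZi n hn2] at hlt
          simp only [hc''def, if_neg (show ¬ n - 1 = 0 by omega)]
          rw [show n - 1 + 1 = n by omega]
          exact hlt
        · intro i hi
          have h3 := hag (i+1) (by omega)
          rw [hSi (i+1) (by omega), hZi (i+1) (by omega)] at h3
          simp only [Nat.add_sub_cancel] at h3
          simp only [hc''def, if_neg (show ¬ i = 0 by omega)]
          exact h3
    · rintro (heq | ⟨n, hlt, hag⟩)
      · refine Or.inl (funext fun i => ?_)
        rcases Nat.lt_or_ge i 2 with hi | hi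
        · interval_cases i
          · rw [hS0, hZ0]
          · rw [hS1, hZ1]
        · rw [hSi i hi, hZi i hi]
          have h2 := congrFun heq (i-1)
          simp only [hc''def, if_neg (show ¬ i - 1 = 0 by omega)] at h2
          rw [show i - 1 + 1 = i by omega] at h2
          exact h2
      · have hn1 : 1 ≤ n := by
          by_contra hcon
          have hn0 : n = 0 := by omega
          subst hn0
          rw [hd0] at hlt
          simp [hc''def] at hlt
        refine Or.inr ⟨n + 1, ?_, ?_⟩
        · rw [hSi (n+1) (by omega), hZi (n+1) (by omega)]
          simp only [Nat.add_sub_cancel]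
          simp only [hc''def, if_neg (show ¬ n = 0 by omega)] at hlt
          exact hlt
        · intro i hi
          rcases Nat.lt_or_ge i 2 with h2 | h2
          · omega
          · rw [hSi i h2, hZi i h2]
            have h3 := hag (i-1) (by omega)
            simp only [hc''def, if_neg (show ¬ i - 1 = 0 by omega)] at h3
            rw [show i - 1 + 1 = i by omega] at h3
            exact h3
  -- ## numeric identity
  have hsum_shift : ∀ f : ℕ → ℝ, ∑ i ∈ Finset.Ico 2 (M+1), f i = ∑ i ∈ Finset.Ico 1 M, f (i+1) := by
    intro f
    rw [show (2:ℕ) = 1 + 1 by omega, show M + 1 = M + 1 by rfl,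
        ← Finset.map_add_right_Ico 1 M 1, Finset.sum_map]
    rfl
  have hrR : (r:ℝ) = ∑ i ∈ Finset.range M, (c i : ℝ) * (a i : ℝ) := by
    have h1 := congrArg (fun z : ℤ => (z:ℝ)) hrS
    push_cast at h1
    exact h1.symm
  have hstep1 : ∑ i ∈ Finset.range M, (c i : ℝ) * (a i : ℝ)
      = (c 1 : ℝ) + ∑ i ∈ Finset.Ico 1 M, (c (i+1) : ℝ) * (a (i+1) : ℝ) := by
    rw [Finset.range_eq_Ico, Finset.sum_eq_sum_Ico_succ_bot (show 0 < M by omega),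
        Finset.sum_eq_sum_Ico_succ_bot (show 1 < M by omega)]
    have hext : ∑ i ∈ Finset.Ico 2 M, (c i:ℝ) * (a i:ℝ)
        = ∑ i ∈ Finset.Ico 2 (M+1), (c i:ℝ) * (a i:ℝ) := by
      rw [Finset.sum_Ico_succ_top (show 2 ≤ M by omega)]
      rw [hcM M le_rfl]
      norm_num
    rw [hext, hsum_shift (fun i => (c i:ℝ) * (a i:ℝ)), hc0, ha1]
    push_cast
    ring
  have hsub : ∀ i : ℕ, (a (i+1) : ℝ) = s0 * (a' i : ℝ) + φ (i+1) := by
    intro i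
    rw [hφs i]
    ring
  set F : ℝ := ∑ i ∈ Finset.Ico 1 M, (c (i+1) : ℝ) * φ (i+1) with hFdef
  have htR : (t : ℝ) = ∑ i ∈ Finset.Ico 1 M, (c (i+1) : ℝ) * (a' i : ℝ) := by
    rw [htdef]
    push_cast
    rw [Finset.range_eq_Ico, Finset.sum_eq_sum_Ico_succ_bot (show 0 < M by omega)]
    have h0term : ((c'' 0 : ℝ)) * (a' 0 : ℝ) = 0 := by simp [hc''def]
    rw [h0term, zero_add]
    refine Finset.sum_congr rfl (fun i hi => ?_)
    simp only [Finset.mem_Ico] at hi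
    simp only [hc''def, if_neg (show ¬ i = 0 by omega)]
  have hrid : (r:ℝ) = (c 1 : ℝ) + s0 * (t:ℝ) + F := by
    rw [hrR, hstep1, htR, hFdef]
    have hptw : ∀ i ∈ Finset.Ico 1 M, (c (i+1):ℝ) * (a (i+1):ℝ)
        = s0 * ((c (i+1):ℝ) * (a' i:ℝ)) + (c (i+1):ℝ) * φ (i+1) :=
      fun i _ => by rw [hsub i]; ring
    rw [Finset.sum_congr rfl hptw, Finset.sum_add_distrib, Finset.mul_sum]
    ring
  -- ## the core bound
  have hcore := core_bound (klCoeff k l) φ c M (fun i => (hφpos i).le) hφmono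
      (fun i _ => hφrec i) (fun i h1 _ => hcb i h1)
      (fun i j h1 hij _ hei hej hrun => hforb_c i j h1 hij hei hej hrun) M le_rfl
  have hsum2 : ∑ i ∈ Finset.Ico 1 (M+1), (c i : ℝ) * φ i = (c 1:ℝ) * φ 1 + F := by
    rw [Finset.sum_eq_sum_Ico_succ_bot (show 1 < M + 1 by omega),
        hsum_shift (fun i => (c i:ℝ) * φ i), hFdef]
  have hbound : (c 1 : ℝ) + F ≤ s0 := by
    rw [hsum2] at hcore
    rw [hφ1] at hcore
    have hmm := hφmono M
    rw [hφ0] at hcore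
    linarith
  -- ## the key numeric equivalence
  have htRnn : (0:ℝ) ≤ (t:ℝ) := by
    rw [htR]
    exact Finset.sum_nonneg (fun i _ => mul_nonneg (by positivity)
      (by exact_mod_cast hposa' i))
  have hFnn : (0:ℝ) ≤ F := by
    rw [hFdef]
    exact Finset.sum_nonneg (fun i _ => mul_nonneg (by positivity) (hφpos _).le)
  have hc1nn : (0:ℝ) ≤ (c 1:ℝ) := by positivity
  have hkey : ((s:ℤ) ≤ t) ↔ s0 * s < (r:ℝ) := by
    constructor
    · intro hst
      have ht1 : (1:ℤ) ≤ t := le_trans (by exact_mod_cast hs) hst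
      have hex : ∃ i ∈ Finset.Ico 1 M, c (i+1) ≠ 0 := by
        by_contra hno
        push_neg at hno
        have ht0 : (t:ℝ) = 0 := by
          rw [htR]
          refine Finset.sum_eq_zero (fun i hi => ?_)
          rw [hno i hi]
          norm_num
        have ht0' : t = 0 := by exact_mod_cast ht0
        omega
      obtain ⟨i0, hi0, hne0⟩ := hex
      have hFpos : 0 < F := by
        rw [hFdef]
        refine Finset.sum_pos' (fun i _ => mul_nonneg (by positivity) (hφpos _).le)
          ⟨i0, hi0, ?_⟩
        have h1c : (1:ℝ) ≤ (c (i0+1) : ℝ) := by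
          exact_mod_cast Nat.one_le_iff_ne_zero.mpr hne0
        nlinarith [hφpos (i0+1)]
      have hts : (s:ℝ) ≤ (t:ℝ) := by exact_mod_cast hst
      rw [hrid]
      nlinarith [mul_nonneg hs0pos.le (by linarith : (0:ℝ) ≤ (t:ℝ) - (s:ℝ))]
    · intro hlt
      by_contra hst
      push_neg at hst
      have hst' : t + 1 ≤ (s:ℤ) := Int.add_one_le_iff.mpr hst
      have hts : (t:ℝ) + 1 ≤ (s:ℝ) := by exact_mod_cast hst'
      rw [hrid] at hlt
      nlinarith [mul_nonneg hs0pos.le (by linarith : (0:ℝ) ≤ (s:ℝ) - (t:ℝ) - 1)]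
  -- ## conclusion
  have hiff1 : (s0 * s < (r:ℝ)) ↔ Preceq (Shift d) (ZeroFirst c) :=
    (hkey.symm.trans hP2.symm).trans hP1.symm
  have hiff2 : (s0 * s < (r:ℝ)) ↔ (s : ℤ) ≤ ⌈s0⁻¹ * r⌉ - 1 := by
    rw [Int.le_sub_one_iff, Int.lt_ceil, ← div_eq_inv_mul, lt_div_iff₀ hs0pos]
    push_cast
    constructor <;> intro <;> linarith
  have hiff3 : (s0 * s < (r:ℝ)) ↔ 1 + ⌊s0 * s⌋ ≤ (r : ℤ) := by
    rw [show (1:ℤ) + ⌊s0 * (s:ℝ)⌋ = ⌊s0 * (s:ℝ)⌋ + 1 from add_comm _ _,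
        Int.add_one_le_iff, Int.floor_lt]
    push_cast
    exact Iff.rfl
  exact ⟨hiff1, hiff2, hiff3⟩
end
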